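/- arXiv:1611.03571 — 11 statements merged into one kernel-verified Lean document; each statement's English description precedes it below -/
import Mathlib

section
/- For every real α with 0 < α < 1, 2∫₀^∞ arctan(αx)/(1+x²) dx = log α · log((1-α)/(1+α)) + Li₂(α) - Li₂(-α). -/
open MeasureTheory Real

noncomputable def Li2 (x : ℝ) : ℝ := ∑' n : ℕ, x ^ (n + 1) / ((n : ℝ) + 1) ^ 2

open Set Filter Topology

lemma li2_summable {x : ℝ} (hx : |x| < 1) :
    Summable (fun n : ℕ => x ^ (n + 1) / ((n : ℝ) + 1) ^ 2) := by
  refine .of_norm_bounded (summable_geometric_of_lt_one (abs_nonneg _) hx) fun i => ?_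
  have h0 : (0:ℝ) ≤ (i:ℝ) := Nat.cast_nonneg i
  have h1 : (1:ℝ) ≤ ((i:ℝ) + 1) ^ 2 := by nlinarith
  calc ‖x ^ (i + 1) / ((i:ℝ) + 1) ^ 2‖ = |x| ^ (i + 1) / ((i:ℝ) + 1) ^ 2 := by
        rw [norm_eq_abs, abs_div, abs_pow, abs_pow, abs_of_nonneg (by positivity : (0:ℝ) ≤ (i:ℝ)+1)]
    _ ≤ |x| ^ (i + 1) / 1 := by gcongr
    _ ≤ |x| ^ i := by
        rw [div_one, pow_succ]
        exact mul_le_of_le_one_right (pow_nonneg (abs_nonneg x) i) hx.le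

lemma li2_hasSum {x : ℝ} (hx : |x| < 1) :
    HasSum (fun n : ℕ => x ^ (n + 1) / ((n : ℝ) + 1) ^ 2) (Li2 x) :=
  (li2_summable hx).hasSum

lemma hasSum_odd_sq {x : ℝ} (hx : |x| < 1) :
    HasSum (fun k : ℕ => 2 * x ^ (2 * k + 1) / (2 * (k:ℝ) + 1) ^ 2)
      (Li2 x - Li2 (-x)) := by
  set term := fun n : ℕ =>
    x ^ (n + 1) / ((n : ℝ) + 1) ^ 2 - (-x) ^ (n + 1) / ((n : ℝ) + 1) ^ 2 with hterm
  have hts : HasSum term (Li2 x - Li2 (-x)) :=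
    (li2_hasSum hx).sub (li2_hasSum (by rwa [abs_neg]))
  have h_eq : term ∘ (2 * ·) =
      fun k : ℕ => 2 * x ^ (2 * k + 1) / (2 * (k:ℝ) + 1) ^ 2 := by
    ext k
    simp only [term, Function.comp]
    rw [Odd.neg_pow ⟨k, rfl⟩]
    push_cast
    ring
  rw [← h_eq]
  rw [(mul_right_injective₀ (two_ne_zero' ℕ)).hasSum_iff ?_]
  · exact hts
  · intro m hm
    rw [range_two_mul, Set.mem_setOf_eq, ← Nat.even_add_one] at hm
    simp only [term]
    rw [Even.neg_pow hm, sub_self]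

lemma integral_t (x : ℝ) {α : ℝ} (hα : 0 ≤ α) :
    ∫ t in Ioc (0:ℝ) α, x / (1 + (t * x) ^ 2) = arctan (α * x) := by
  rw [← intervalIntegral.integral_of_le hα]
  have hd : ∀ t ∈ uIcc (0:ℝ) α,
      HasDerivAt (fun t => arctan (t * x)) (x / (1 + (t * x) ^ 2)) t := by
    intro t _
    have h1 : HasDerivAt (fun t : ℝ => t * x) x t := hasDerivAt_mul_const x
    have h2 := (Real.hasDerivAt_arctan (t * x)).comp t h1
    refine h2.congr_deriv ?_
    ring
  rw [intervalIntegral.integral_eq_sub_of_hasDerivAt hd ?_]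
  · simp
  · apply Continuous.intervalIntegrable
    exact continuous_const.div (by continuity) (fun t => by positivity)

set_option maxHeartbeats 1000000 in
lemma integral_x {t : ℝ} (ht0 : 0 < t) (ht1 : t < 1) :
    ∫ x in Ioi (0:ℝ), x / ((1 + (t * x) ^ 2) * (1 + x ^ 2))
      = -Real.log t / (1 - t ^ 2) := by
  have ht2 : (0:ℝ) < 1 - t ^ 2 := by nlinarith
  have hderiv : ∀ x ∈ Ici (0:ℝ),
      HasDerivAt (fun x => (Real.log (1 + x ^ 2) - Real.log (1 + (t * x) ^ 2)) / (2 * (1 - t ^ 2)))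
        (x / ((1 + (t * x) ^ 2) * (1 + x ^ 2))) x := by
    intro x _
    have h1 : HasDerivAt (fun x : ℝ => 1 + x ^ 2) (2 * x) x := by
      simpa using (hasDerivAt_pow 2 x).const_add 1
    have h2 : HasDerivAt (fun x : ℝ => 1 + (t * x) ^ 2) (2 * t ^ 2 * x) x := by
      have hmul : HasDerivAt (fun x : ℝ => t * x) t x := by
        simpa using (hasDerivAt_id x).const_mul t
      have h := (hmul.pow 2).const_add 1
      refine h.congr_deriv ?_
      norm_num only
      ring
    have hl1 : HasDerivAt (fun x : ℝ => Real.log (1 + x ^ 2))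
        (2 * x / (1 + x ^ 2)) x := h1.log (by positivity)
    have hl2 : HasDerivAt (fun x : ℝ => Real.log (1 + (t * x) ^ 2))
        (2 * t ^ 2 * x / (1 + (t * x) ^ 2)) x := h2.log (by positivity)
    have h3 := (hl1.sub hl2).div_const (2 * (1 - t ^ 2))
    refine h3.congr_deriv ?_
    have hx1 : (1:ℝ) + x ^ 2 ≠ 0 := by positivity
    have hx2 : (1:ℝ) + (t * x) ^ 2 ≠ 0 := by positivity
    have hx3 : (1:ℝ) - t ^ 2 ≠ 0 := ne_of_gt ht2
    field_simp
    ring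
  have hnonneg : ∀ x ∈ Ioi (0:ℝ),
      0 ≤ x / ((1 + (t * x) ^ 2) * (1 + x ^ 2)) := by
    intro x hx
    have : (0:ℝ) < x := hx
    positivity
  have hratio : Tendsto (fun x : ℝ => (1 + x ^ 2) / (1 + (t * x) ^ 2)) atTop
      (𝓝 ((t ^ 2)⁻¹)) := by
    have h0 : Tendsto (fun x : ℝ => (x ^ 2)⁻¹) atTop (𝓝 0) :=
      (tendsto_pow_atTop two_ne_zero).inv_tendsto_atTop
    have h := (h0.add (tendsto_const_nhds (x := (1:ℝ)))).div
      (h0.add (tendsto_const_nhds (x := t ^ 2))) (by positivity)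
    have h' : Tendsto (fun x : ℝ => ((x ^ 2)⁻¹ + 1) / ((x ^ 2)⁻¹ + t ^ 2)) atTop
        (𝓝 ((t ^ 2)⁻¹)) := by
      convert h using 2
      exacts [rfl, by rw [zero_add, zero_add, one_div]]
    apply h'.congr'
    filter_upwards [eventually_gt_atTop (0:ℝ)] with x hx
    have hx2 : (0:ℝ) < x ^ 2 := pow_pos hx 2
    have h5 : (0:ℝ) < (x ^ 2)⁻¹ := inv_pos.2 hx2
    rw [div_eq_div_iff (add_pos_of_pos_of_nonneg h5 (sq_nonneg t)).ne'
      (by positivity : (0:ℝ) < 1 + (t * x) ^ 2).ne']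
    field_simp
  have hGlim : Tendsto (fun x => (Real.log (1 + x ^ 2) - Real.log (1 + (t * x) ^ 2)) / (2 * (1 - t ^ 2)))
      atTop (𝓝 (Real.log ((t ^ 2)⁻¹) / (2 * (1 - t ^ 2)))) := by
    have hlog : Tendsto (fun x : ℝ => Real.log ((1 + x ^ 2) / (1 + (t * x) ^ 2))) atTop
        (𝓝 (Real.log ((t ^ 2)⁻¹))) :=
      (Real.continuousAt_log (by positivity)).tendsto.comp hratio
    have heq : (fun x : ℝ => (Real.log (1 + x ^ 2) - Real.log (1 + (t * x) ^ 2)) / (2 * (1 - t ^ 2)))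
        = fun x => Real.log ((1 + x ^ 2) / (1 + (t * x) ^ 2)) / (2 * (1 - t ^ 2)) := by
      funext x
      rw [Real.log_div (by positivity) (by positivity)]
    rw [heq]
    exact hlog.div_const _
  rw [integral_Ioi_of_hasDerivAt_of_nonneg' hderiv hnonneg hGlim]
  norm_num
  have hx3 : (1:ℝ) - t ^ 2 ≠ 0 := ne_of_gt ht2
  field_simp

set_option maxHeartbeats 1000000 in
lemma integral_k {α : ℝ} (h0 : 0 < α) (h1 : α < 1) (k : ℕ) :
    IntegrableOn (fun t => (-Real.log t) * t ^ (2 * k)) (Ioc (0:ℝ) α) ∧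
    ∫ t in Ioc (0:ℝ) α, (-Real.log t) * t ^ (2 * k)
      = α ^ (2 * k + 1) * (-Real.log α) / (2 * (k:ℝ) + 1)
        + α ^ (2 * k + 1) / (2 * (k:ℝ) + 1) ^ 2 := by
  have hm : (2 * (k:ℝ) + 1) ≠ 0 := by positivity
  set H : ℝ → ℝ := fun t =>
    t ^ (2 * k + 1) / (2 * (k:ℝ) + 1) ^ 2
      - t ^ (2 * k) * (t * Real.log t) / (2 * (k:ℝ) + 1) with hH
  have hcont : Continuous H := by
    apply Continuous.sub
    · exact (continuous_pow _).div_const _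
    · exact ((continuous_pow _).mul Real.continuous_mul_log).div_const _
  have hder : ∀ t ∈ Ioo (0:ℝ) α,
      HasDerivAt H ((-Real.log t) * t ^ (2 * k)) t := by
    intro t ht
    have htne : t ≠ 0 := ne_of_gt ht.1
    have h1 : HasDerivAt (fun t : ℝ => t ^ (2 * k + 1))
        ((2 * (k:ℝ) + 1) * t ^ (2 * k)) t := by
      have := hasDerivAt_pow (2 * k + 1) t
      norm_num at this
      exact this
    have h2 : HasDerivAt Real.log t⁻¹ t := Real.hasDerivAt_log htne
    have h3 := h1.mul h2
    have hHeq : H = fun t =>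
        t ^ (2 * k + 1) / (2 * (k:ℝ) + 1) ^ 2
          - t ^ (2 * k + 1) * Real.log t / (2 * (k:ℝ) + 1) := by
      funext s
      simp only [hH]
      ring
    rw [hHeq]
    have h4 := (h1.div_const ((2 * (k:ℝ) + 1) ^ 2)).sub (h3.div_const (2 * (k:ℝ) + 1))
    refine h4.congr_deriv ?_
    field_simp
    ring
  have hnn : ∀ t ∈ Ioo (0:ℝ) α, 0 ≤ (-Real.log t) * t ^ (2 * k) := by
    intro t ht
    have hlog : Real.log t ≤ 0 := Real.log_nonpos ht.1.le (by linarith [ht.2])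
    have ht' := ht.1.le
    have h' : 0 ≤ -Real.log t := by linarith
    positivity
  have hint : IntegrableOn (fun t => (-Real.log t) * t ^ (2 * k)) (Ioc (0:ℝ) α) :=
    intervalIntegral.integrableOn_deriv_of_nonneg hcont.continuousOn hder hnn
  refine ⟨hint, ?_⟩
  have hval := intervalIntegral.integral_eq_sub_of_hasDeriv_right_of_le h0.le
    hcont.continuousOn (fun t ht => (hder t ht).hasDerivWithinAt)
    ((intervalIntegrable_iff_integrableOn_Ioc_of_le h0.le).2 hint)
  rw [intervalIntegral.integral_of_le h0.le] at hval
  rw [hval]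
  have hH0 : H 0 = 0 := by simp [hH]
  rw [hH0, sub_zero, hH]
  field_simp
  ring

set_option maxHeartbeats 1000000 in
theorem stmt0 (α : ℝ) (h0 : 0 < α) (h1 : α < 1) :
    2 * ∫ x in Set.Ioi (0 : ℝ), Real.arctan (α * x) / (1 + x ^ 2) =
      Real.log α * Real.log ((1 - α) / (1 + α)) + Li2 α - Li2 (-α) := by
  have habs : |α| < 1 := by rw [abs_of_pos h0]; exact h1
  set f : ℝ → ℝ → ℝ := fun x t => x / ((1 + (t * x) ^ 2) * (1 + x ^ 2)) with hf
  set μ := volume.restrict (Ioi (0:ℝ)) with hμ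
  set ν := volume.restrict (Ioc (0:ℝ) α) with hν
  -- inner t-integral
  have key1 : ∀ x : ℝ, ∫ t, f x t ∂ν = arctan (α * x) / (1 + x ^ 2) := by
    intro x
    have he : ∀ t : ℝ, f x t = (x / (1 + (t * x) ^ 2)) / (1 + x ^ 2) := by
      intro t; rw [hf]; rw [div_div]
    simp only [he]
    rw [integral_div]
    rw [hν, integral_t x h0.le]
  -- integrability on the product
  have hcf : Continuous (Function.uncurry f) := by
    apply Continuous.div continuous_fst
    · continuity
    · intro p; positivity
  have hmeas : AEStronglyMeasurable (Function.uncurry f) (μ.prod ν) :=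
    hcf.aestronglyMeasurable
  have hintf : Integrable (Function.uncurry f) (μ.prod ν) := by
    rw [integrable_prod_iff hmeas]
    constructor
    · filter_upwards with x
      exact (hcf.comp (Continuous.prodMk_right x)).integrableOn_Ioc
    · have hbound : Integrable (fun x : ℝ => (π / 2) * (1 + x ^ 2)⁻¹) μ :=
        (integrable_inv_one_add_sq.restrict).const_mul _
      apply Integrable.mono' hbound (hmeas.norm.integral_prod_right')
      rw [hμ]
      filter_upwards [ae_restrict_mem measurableSet_Ioi] with x hx
      have hx0 : (0:ℝ) < x := hx
      have hnn : ∀ t : ℝ, 0 ≤ f x t := by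
        intro t; rw [hf]; positivity
      have heq : (fun t : ℝ => ‖Function.uncurry f (x, t)‖) = fun t => f x t := by
        funext t
        simp only [Function.uncurry_apply_pair]
        exact Real.norm_of_nonneg (hnn t)
      rw [Real.norm_of_nonneg (integral_nonneg fun t => norm_nonneg _), heq, key1 x]
      have harctan : arctan (α * x) ≤ π / 2 := (arctan_lt_pi_div_two _).le
      rw [div_eq_mul_inv]
      exact mul_le_mul_of_nonneg_right harctan (by positivity)
  -- swap
  have hswap := integral_integral_swap hintf
  have hLHS : ∫ x in Set.Ioi (0:ℝ), arctan (α * x) / (1 + x ^ 2)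
      = ∫ t, ∫ x, f x t ∂μ ∂ν := by
    rw [← hswap]
    rw [show (∫ x in Set.Ioi (0:ℝ), arctan (α * x) / (1 + x ^ 2)) =
        ∫ x, arctan (α * x) / (1 + x ^ 2) ∂μ from rfl]
    congr 1
    funext x
    rw [← key1 x]
  -- inner x-integral
  have key2 : (∫ t, ∫ x, f x t ∂μ ∂ν) = ∫ t in Ioc (0:ℝ) α, -Real.log t / (1 - t ^ 2) := by
    rw [hν]
    apply setIntegral_congr_fun measurableSet_Ioc
    intro t ht
    rw [hμ, hf]
    exact integral_x ht.1 (lt_of_le_of_lt ht.2 h1)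
  -- series for the t-integrand
  have key3 : ∀ t ∈ Ioc (0:ℝ) α,
      -Real.log t / (1 - t ^ 2) = ∑' k : ℕ, (-Real.log t) * t ^ (2 * k) := by
    intro t ht
    have ht1 : t < 1 := lt_of_le_of_lt ht.2 h1
    have hlt : t ^ 2 < 1 := by nlinarith [ht.1]
    have hs := (hasSum_geometric_of_lt_one (sq_nonneg t) hlt).mul_left (-Real.log t)
    have hs' : HasSum (fun k : ℕ => (-Real.log t) * t ^ (2 * k))
        (-Real.log t / (1 - t ^ 2)) := by
      have he : (fun k : ℕ => -Real.log t * (t ^ 2) ^ k)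
          = fun k : ℕ => (-Real.log t) * t ^ (2 * k) := by
        funext k; rw [← pow_mul]
      rw [← he, div_eq_mul_inv]
      exact hs
    exact hs'.tsum_eq.symm
  -- termwise integration
  set d : ℕ → ℝ := fun k =>
    α ^ (2 * k + 1) * (-Real.log α) / (2 * (k:ℝ) + 1)
      + α ^ (2 * k + 1) / (2 * (k:ℝ) + 1) ^ 2 with hd
  have hdnn : ∀ k, 0 ≤ d k := by
    intro k
    have hlog : 0 ≤ -Real.log α := by
      have := Real.log_nonpos h0.le h1.le
      linarith
    have hα := h0.le
    rw [hd]
    positivity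
  have hS1 := Real.hasSum_log_sub_log_of_abs_lt_one habs
  have hS2 := hasSum_odd_sq habs
  have hdsum : HasSum d
      (-Real.log α / 2 * (Real.log (1 + α) - Real.log (1 - α))
        + (1 / 2) * (Li2 α - Li2 (-α))) := by
    have h := (hS1.mul_left (-Real.log α / 2)).add (hS2.mul_left (1 / 2))
    have heq : (fun k : ℕ =>
        -Real.log α / 2 * (2 * (1 / (2 * (k:ℝ) + 1)) * α ^ (2 * k + 1))
          + 1 / 2 * (2 * α ^ (2 * k + 1) / (2 * (k:ℝ) + 1) ^ 2)) = d := by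
      funext k
      rw [hd]
      ring
    rwa [heq] at h
  have key4 : (∫ t in Ioc (0:ℝ) α, -Real.log t / (1 - t ^ 2)) = ∑' k : ℕ, d k := by
    rw [setIntegral_congr_fun measurableSet_Ioc key3]
    have hmeasK : ∀ k : ℕ, AEStronglyMeasurable
        (fun t : ℝ => (-Real.log t) * t ^ (2 * k)) ν :=
      fun k => ((Real.measurable_log.neg).mul (measurable_id.pow_const _)).aestronglyMeasurable
    have hvalK : ∀ k : ℕ, (∫⁻ t, ‖(-Real.log t) * t ^ (2 * k)‖ₑ ∂ν) = ENNReal.ofReal (d k) := by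
      intro k
      have hik : Integrable (fun t => (-Real.log t) * t ^ (2 * k)) ν := by
        rw [hν]; exact (integral_k h0 h1 k).1
      have hnn : ∀ᵐ t ∂ν, 0 ≤ (-Real.log t) * t ^ (2 * k) := by
        rw [hν]
        filter_upwards [ae_restrict_mem measurableSet_Ioc] with t ht
        have hlog : Real.log t ≤ 0 := Real.log_nonpos ht.1.le (by linarith [ht.2])
        have h' : 0 ≤ -Real.log t := by linarith
        have ht' := ht.1.le
        positivity
      rw [show ENNReal.ofReal (d k)
            = ENNReal.ofReal (∫ t, (-Real.log t) * t ^ (2 * k) ∂ν) by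
          rw [hν, (integral_k h0 h1 k).2, hd]]
      rw [ofReal_integral_eq_lintegral_ofReal hik hnn]
      apply lintegral_congr_ae
      filter_upwards [hnn] with t ht
      rw [← Real.enorm_eq_ofReal ht]
    rw [integral_tsum hmeasK ?_]
    · exact tsum_congr fun k => by rw [hν, (integral_k h0 h1 k).2, hd]
    · have hsum_eq : (∑' k : ℕ, ∫⁻ t, ‖(-Real.log t) * t ^ (2 * k)‖ₑ ∂ν)
          = ENNReal.ofReal (∑' k, d k) := by
        rw [tsum_congr hvalK]
        exact (ENNReal.ofReal_tsum_of_nonneg hdnn hdsum.summable).symm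
      rw [hsum_eq]
      exact ENNReal.ofReal_ne_top
  rw [hLHS, key2, key4, hdsum.tsum_eq]
  rw [Real.log_div (ne_of_gt (by linarith : (0:ℝ) < 1 - α)) (by positivity : (1:ℝ) + α ≠ 0)]
  ring
end

section
/- For every natural n ≥ 0, ∫₀¹ x^{2n+1}/(1+x²) dx = (-1)ⁿ(log 2 - Hₙ⁻)/2, where Hₙ⁻ = ∑_{k=1}^n (-1)^{k-1}/k is the n-th skew-harmonic number (H₀⁻ = 0). -/
open MeasureTheory Real

noncomputable def skewH (n : ℕ) : ℝ := ∑ k ∈ Finset.range n, (-1) ^ k / ((k : ℝ) + 1)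

lemma cont (m : ℕ) : Continuous (fun x : ℝ => x ^ m / (1 + x ^ 2)) := by
  apply Continuous.div (by continuity) (by continuity)
  intro x; positivity

theorem stmt2 (n : ℕ) :
    ∫ x in (0:ℝ)..1, x ^ (2 * n + 1) / (1 + x ^ 2) =
      (-1) ^ n * (Real.log 2 - skewH n) / 2 := by
  induction n with
  | zero =>
      simp only [skewH, Finset.range_zero, Finset.sum_empty, pow_zero, one_mul, sub_zero,
        Nat.mul_zero, Nat.zero_add, pow_one]
      have h : ∀ x ∈ Set.uIcc (0:ℝ) 1, HasDerivAt (fun x : ℝ => Real.log (1 + x ^ 2) / 2)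
          (x / (1 + x ^ 2)) x := by
        intro x _
        have hx : (1 : ℝ) + x ^ 2 ≠ 0 := by positivity
        have : HasDerivAt (fun x : ℝ => Real.log (1 + x ^ 2)) ((0 + 2 * x) / (1 + x ^ 2)) x := by
          exact (HasDerivAt.log (by simpa using (hasDerivAt_pow 2 x).const_add 1) hx)
        have := this.div_const 2
        convert this using 1
        exacts [rfl, rfl, by ring]
      rw [intervalIntegral.integral_eq_sub_of_hasDerivAt h
        (by simpa using (cont 1).intervalIntegrable 0 1)]
      norm_num
  | succ n ih =>
      have key : ∀ x : ℝ, x ^ (2 * (n + 1) + 1) / (1 + x ^ 2)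
          = x ^ (2 * n + 1) - x ^ (2 * n + 1) / (1 + x ^ 2) := by
        intro x
        have hx : (1 : ℝ) + x ^ 2 ≠ 0 := by positivity
        field_simp
        ring
      simp only [key]
      rw [intervalIntegral.integral_sub (by
          exact (continuous_pow _).intervalIntegrable _ _)
          ((cont _).intervalIntegrable _ _), ih, integral_pow]
      have h1 : skewH (n + 1) = skewH n + (-1) ^ n / ((n : ℝ) + 1) := by
        simp [skewH, Finset.sum_range_succ]
      rw [h1]
      push_cast
      have hne : ((n : ℝ) + 1) ≠ 0 := by positivity
      have h2 : (2 * (n : ℝ) + 1 + 1) ≠ 0 := by positivity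
      have h3 : ((-1:ℝ)) ^ (n * 2) = 1 := by rw [mul_comm, pow_mul]; norm_num
      field_simp
      ring_nf
      rw [h3]
      ring
end

section
/- For every real α with |α| ≤ 1, 2∫₀¹ arctan(αx)/(1+x²) dx = ∑_{n=0}^∞ (log 2 - Hₙ⁻) α^{2n+1}/(2n+1), where Hₙ⁻ = ∑_{k=1}^n (-1)^{k-1}/k. -/
open MeasureTheory Real

lemma cont_aux (n : ℕ) : Continuous (fun x : ℝ => x ^ n / (1 + x ^ 2)) := by
  apply Continuous.div (by continuity) (by continuity)
  intro x; positivity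

lemma int_aux (n : ℕ) (a b : ℝ) :
    IntervalIntegrable (fun x : ℝ => x ^ n / (1 + x ^ 2)) volume a b :=
  (cont_aux n).intervalIntegrable a b

lemma base_int : ∫ x in (0:ℝ)..1, x ^ 1 / (1 + x ^ 2) = Real.log 2 / 2 := by
  have hderiv : ∀ x ∈ Set.uIcc (0:ℝ) 1,
      HasDerivAt (fun y : ℝ => Real.log (1 + y ^ 2) / 2) (x ^ 1 / (1 + x ^ 2)) x := by
    intro x _
    have h1 : HasDerivAt (fun y : ℝ => 1 + y ^ 2) (2 * x) x := by
      simpa using ((hasDerivAt_pow 2 x).const_add 1)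
    have h2 : (1 + x ^ 2) ≠ 0 := by positivity
    have := ((Real.hasDerivAt_log h2).comp x h1).div_const 2
    refine this.congr_deriv ?_
    ring
  have := intervalIntegral.integral_eq_sub_of_hasDerivAt hderiv (int_aux 1 0 1)
  rw [this]
  norm_num

lemma key_int (n : ℕ) : ∫ x in (0:ℝ)..1, x ^ (2 * n + 1) / (1 + x ^ 2)
    = (-1) ^ n / 2 * (Real.log 2 - skewH n) := by
  induction n with
  | zero =>
    have := base_int
    simp only [pow_one] at this ⊢
    norm_num [skewH]
    linarith
  | succ n ih =>
    have hsplit : ∀ x : ℝ, x ^ (2 * (n + 1) + 1) / (1 + x ^ 2)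
        = x ^ (2 * n + 1) - x ^ (2 * n + 1) / (1 + x ^ 2) := by
      intro x
      have h2 : (1 + x ^ 2) ≠ 0 := by positivity
      field_simp
      ring
    rw [intervalIntegral.integral_congr (fun x _ => hsplit x),
      intervalIntegral.integral_sub ((continuous_pow _).intervalIntegrable 0 1)
        (int_aux (2 * n + 1) 0 1), integral_pow, ih]
    have hH : skewH (n + 1) = skewH n + (-1) ^ n / ((n : ℝ) + 1) := by
      simp [skewH, Finset.sum_range_succ]
    rw [hH]
    have hn : ((n : ℝ) + 1) ≠ 0 := by positivity
    have hsq : ((-1 : ℝ)) ^ n * (-1) ^ n = 1 := by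
      rw [← pow_add]
      exact Even.neg_one_pow ⟨n, rfl⟩
    simp only [one_pow, zero_pow (by omega : 2*n+1+1 ≠ 0)]
    push_cast
    rcases Nat.even_or_odd n with he | ho
    · rw [he.neg_one_pow, he.add_one.neg_one_pow]
      field_simp
      ring
    · rw [ho.neg_one_pow, ho.add_one.neg_one_pow]
      field_simp
      ring

lemma contF (α : ℝ) (n : ℕ) :
    Continuous (fun x : ℝ => (-1) ^ n * (α * x) ^ (2 * n + 1) / ((2 * n + 1 : ℕ) : ℝ) / (1 + x ^ 2)) := by
  apply Continuous.div (by continuity) (by continuity)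
  intro x; positivity

lemma intF (α : ℝ) (n : ℕ) :
    IntegrableOn (fun x : ℝ => (-1) ^ n * (α * x) ^ (2 * n + 1) / ((2 * n + 1 : ℕ) : ℝ) / (1 + x ^ 2))
      (Set.Ioo (0:ℝ) 1) volume :=
  ((contF α n).continuousOn.integrableOn_compact isCompact_Icc).mono_set Set.Ioo_subset_Icc_self

theorem stmt3 (α : ℝ) (h : |α| ≤ 1) :
    2 * ∫ x in (0:ℝ)..1, Real.arctan (α * x) / (1 + x ^ 2) =
      ∑' n : ℕ, (Real.log 2 - skewH n) * α ^ (2 * n + 1) / (2 * (n : ℝ) + 1) := by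
  set F : ℕ → ℝ → ℝ :=
    fun n x => (-1) ^ n * (α * x) ^ (2 * n + 1) / ((2 * n + 1 : ℕ) : ℝ) / (1 + x ^ 2) with hF
  have hpt : Set.EqOn (fun x => Real.arctan (α * x) / (1 + x ^ 2)) (fun x => ∑' n, F n x)
      (Set.Ioo (0:ℝ) 1) := by
    intro x hx
    have hx0 : (0:ℝ) < x := hx.1
    have hx1 : x < 1 := hx.2
    have hax : ‖α * x‖ < 1 := by
      rw [Real.norm_eq_abs, abs_mul, abs_of_pos hx0]
      calc |α| * x ≤ 1 * x := by gcongr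
        _ < 1 := by linarith
    exact ((Real.hasSum_arctan hax).div_const (1 + x ^ 2)).tsum_eq.symm
  have hnorm : ∀ n : ℕ, ∫ x in Set.Ioo (0:ℝ) 1, ‖F n x‖ ≤ 1 / ((n : ℝ) + 1) ^ 2 := by
    intro n
    have hb : ∀ x ∈ Set.Ioo (0:ℝ) 1, ‖F n x‖ ≤ x ^ (2 * n + 1) / ((2 * n + 1 : ℕ) : ℝ) := by
      intro x hx
      have hx0 : (0:ℝ) < x := hx.1
      have h1 : |α * x| ≤ x := by
        rw [abs_mul, abs_of_pos hx0]
        calc |α| * x ≤ 1 * x := by gcongr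
          _ = x := one_mul x
      have h2 : |α * x| ^ (2 * n + 1) ≤ x ^ (2 * n + 1) :=
        pow_le_pow_left₀ (abs_nonneg _) h1 _
      have h3 : (0:ℝ) < ((2 * n + 1 : ℕ) : ℝ) := by positivity
      have h4 : (1:ℝ) ≤ 1 + x ^ 2 := by nlinarith
      calc ‖F n x‖ = |α * x| ^ (2 * n + 1) / ((2 * n + 1 : ℕ) : ℝ) / (1 + x ^ 2) := by
            rw [Real.norm_eq_abs, abs_div, abs_div, abs_mul, abs_pow (-1), abs_neg, abs_one,
              one_pow, one_mul, abs_pow, abs_of_pos h3, abs_of_pos (by positivity : (0:ℝ) < 1 + x ^ 2)]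
        _ ≤ x ^ (2 * n + 1) / ((2 * n + 1 : ℕ) : ℝ) / 1 := by gcongr
        _ = x ^ (2 * n + 1) / ((2 * n + 1 : ℕ) : ℝ) := div_one _
    have hbint : IntegrableOn (fun x : ℝ => x ^ (2 * n + 1) / ((2 * n + 1 : ℕ) : ℝ))
        (Set.Ioo (0:ℝ) 1) volume :=
      (((continuous_pow _).div_const _).continuousOn.integrableOn_compact
        isCompact_Icc).mono_set Set.Ioo_subset_Icc_self
    calc ∫ x in Set.Ioo (0:ℝ) 1, ‖F n x‖
        ≤ ∫ x in Set.Ioo (0:ℝ) 1, x ^ (2 * n + 1) / ((2 * n + 1 : ℕ) : ℝ) :=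
          MeasureTheory.setIntegral_mono_on ((intF α n).norm) hbint measurableSet_Ioo hb
      _ = (∫ x in (0:ℝ)..1, x ^ (2 * n + 1)) / ((2 * n + 1 : ℕ) : ℝ) := by
          rw [intervalIntegral.integral_of_le zero_le_one,
            MeasureTheory.integral_Ioc_eq_integral_Ioo, integral_div]
      _ = 1 / ((2 * (n:ℝ) + 1 + 1) * (2 * (n:ℝ) + 1)) := by
          rw [integral_pow]
          push_cast
          rw [one_pow, zero_pow (by omega : 2 * n + 1 + 1 ≠ 0)]
          have h1 : (2 * (n:ℝ) + 1) ≠ 0 := by positivity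
          have h2 : (2 * (n:ℝ) + 1 + 1) ≠ 0 := by positivity
          field_simp
          norm_num
      _ ≤ 1 / ((n : ℝ) + 1) ^ 2 := by
          apply div_le_div_of_nonneg_left one_pos.le (by positivity)
          nlinarith [(by positivity : (0:ℝ) ≤ (n:ℝ))]
  have hsummable : Summable (fun n : ℕ => ∫ x in Set.Ioo (0:ℝ) 1, ‖F n x‖) := by
    have hs : Summable (fun n : ℕ => 1 / ((n : ℝ) + 1) ^ 2) := by
      have := Real.summable_one_div_nat_pow.mpr (by norm_num : 1 < 2)
      have h2 := (summable_nat_add_iff 1).mpr this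
      refine h2.congr fun n => ?_
      push_cast
      ring
    exact Summable.of_nonneg_of_le
      (fun n => MeasureTheory.integral_nonneg fun x => norm_nonneg _) hnorm hs
  rw [intervalIntegral.integral_of_le zero_le_one, MeasureTheory.integral_Ioc_eq_integral_Ioo,
    MeasureTheory.setIntegral_congr_fun measurableSet_Ioo hpt,
    ← MeasureTheory.integral_tsum_of_summable_integral_norm (fun n => intF α n) hsummable,
    ← tsum_mul_left]
  apply tsum_congr
  intro n
  have hFn : ∫ x in Set.Ioo (0:ℝ) 1, F n x
      = ((-1) ^ n * α ^ (2 * n + 1) / ((2 * n + 1 : ℕ) : ℝ)) *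
        ∫ x in (0:ℝ)..1, x ^ (2 * n + 1) / (1 + x ^ 2) := by
    rw [intervalIntegral.integral_of_le zero_le_one, MeasureTheory.integral_Ioc_eq_integral_Ioo,
      ← MeasureTheory.integral_const_mul]
    apply MeasureTheory.setIntegral_congr_fun measurableSet_Ioo
    intro x _
    simp only [hF, mul_pow]
    ring
  rw [hFn, key_int n]
  push_cast
  rcases Nat.even_or_odd n with he | ho
  · rw [he.neg_one_pow]; ring
  · rw [ho.neg_one_pow]; ring
end

section
/- π²/16 = ∑_{n=0}^∞ (log 2 - Hₙ⁻)/(2n+1), where Hₙ⁻ = ∑_{k=1}^n (-1)^{k-1}/k (H₀⁻ = 0). -/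
open Real

namespace Stmt4Aux

open intervalIntegral Filter

lemma cont_aux (k : ℕ) : Continuous (fun t : ℝ => t ^ k / (1 + t^2)) := by
  apply Continuous.div (by continuity) (by continuity)
  intro t; positivity

noncomputable def J (n : ℕ) : ℝ := ∫ t in (0:ℝ)..1, t ^ (2*n+1) / (1 + t^2)

lemma J_nonneg (n : ℕ) : 0 ≤ J n := by
  apply intervalIntegral.integral_nonneg zero_le_one
  intro u hu
  exact div_nonneg (pow_nonneg hu.1 _) (by positivity)

lemma J_le (n : ℕ) : J n ≤ 1 / (2*(n:ℝ)+2) := by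
  have h : J n ≤ ∫ t in (0:ℝ)..1, t ^ (2*n+1) := by
    apply intervalIntegral.integral_mono_on zero_le_one
      ((cont_aux _).intervalIntegrable _ _)
      ((continuous_pow _).intervalIntegrable _ _)
    intro x hx
    rw [div_le_iff₀ (by positivity)]
    nlinarith [mul_nonneg (pow_nonneg hx.1 (2*n+1)) (sq_nonneg x)]
  rw [integral_pow, one_pow, zero_pow (by omega : 2*n+1+1 ≠ 0), sub_zero] at h
  push_cast at h
  calc J n ≤ _ := h
    _ ≤ 1 / (2*(n:ℝ)+2) := by
        apply le_of_eq
        ring_nf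

lemma J_add (n : ℕ) : 2 * J (n+1) + 2 * J n = 1 / ((n:ℝ)+1) := by
  have h : ∀ t : ℝ, t ^ (2*(n+1)+1) / (1 + t^2) + t ^ (2*n+1) / (1 + t^2) = t ^ (2*n+1) := by
    intro t
    have ht : (1:ℝ) + t^2 ≠ 0 := by positivity
    field_simp
    ring
  have h2 : J (n+1) + J n = ∫ t in (0:ℝ)..1, t ^ (2*n+1) := by
    rw [J, J, ← intervalIntegral.integral_add ((cont_aux _).intervalIntegrable _ _)
        ((cont_aux _).intervalIntegrable _ _)]
    simp_rw [h]
  rw [integral_pow, one_pow, zero_pow (by omega : 2*n+1+1 ≠ 0), sub_zero] at h2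
  push_cast at h2
  have hn : ((n:ℝ)+1) ≠ 0 := by positivity
  have hn2 : (2*(n:ℝ)+1+1) ≠ 0 := by positivity
  have h4 : (2:ℝ)*(1/(2*(n:ℝ)+1+1)) = 1/((n:ℝ)+1) := by
    field_simp
    ring
  linear_combination 2*h2 + h4

lemma J_zero : 2 * J 0 = Real.log 2 := by
  have hF : ∀ t ∈ Set.uIcc (0:ℝ) 1, HasDerivAt (fun t : ℝ => (1/2) * Real.log (1 + t^2))
      (t ^ (2*0+1) / (1 + t^2)) t := by
    intro t _
    have h1 : HasDerivAt (fun t : ℝ => 1 + t^2) (2*t) t := by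
      simpa using ((hasDerivAt_pow 2 t).const_add 1)
    have h2 := (Real.hasDerivAt_log (by positivity : (0:ℝ) < 1 + t^2).ne').comp t h1
    have h3 := h2.const_mul (1/2 : ℝ)
    refine h3.congr_deriv ?_
    have ht : (1:ℝ) + t^2 ≠ 0 := by positivity
    field_simp
    ring
  have key := intervalIntegral.integral_eq_sub_of_hasDerivAt hF ((cont_aux _).intervalIntegrable _ _)
  rw [J, key]
  norm_num
  ring

lemma tail (n : ℕ) : Real.log 2 - skewH n = (-1)^n * (2 * J n) := by
  induction n with
  | zero => simp [skewH, J_zero]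
  | succ n ih =>
    have hs : skewH (n+1) = skewH n + (-1)^n / ((n:ℝ)+1) := by
      rw [skewH, skewH, Finset.sum_range_succ]
    rw [hs]
    linear_combination ih + ((-1:ℝ))^n * J_add n

noncomputable def K (N : ℕ) (t : ℝ) : ℝ := ∫ s in (0:ℝ)..t, s ^ (2*N) / (1 + s^2)

lemma arctan_eq (N : ℕ) (t : ℝ) :
    Real.arctan t = (∑ n ∈ Finset.range N, (-1)^n * t^(2*n+1) / (2*(n:ℝ)+1)) + (-1)^N * K N t := by
  induction N with
  | zero =>
    have hF : ∀ s ∈ Set.uIcc (0:ℝ) t, HasDerivAt Real.arctan (s ^ (2*0) / (1 + s^2)) s := by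
      intro s _
      simpa using Real.hasDerivAt_arctan s
    have key := intervalIntegral.integral_eq_sub_of_hasDerivAt hF ((cont_aux _).intervalIntegrable _ _)
    simp only [Real.arctan_zero, sub_zero] at key
    simp [K, key]
  | succ N ih =>
    have key : K N t = t^(2*N+1) / (2*(N:ℝ)+1) - K (N+1) t := by
      have h : ∀ s : ℝ, s ^ (2*N) / (1 + s^2) + s ^ (2*(N+1)) / (1 + s^2) = s ^ (2*N) := by
        intro s
        have hs : (1:ℝ) + s^2 ≠ 0 := by positivity
        field_simp
        ring
      have h2 : K N t + K (N+1) t = ∫ s in (0:ℝ)..t, s ^ (2*N) := by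
        rw [K, K, ← intervalIntegral.integral_add ((cont_aux _).intervalIntegrable _ _)
          ((cont_aux _).intervalIntegrable _ _)]
        simp_rw [h]
      rw [integral_pow] at h2
      push_cast at h2
      rw [eq_sub_iff_add_eq, h2]
      rw [zero_pow (by omega : 2*N+1 ≠ 0), sub_zero]
    rw [Finset.sum_range_succ, ih, key]
    push_cast
    ring

lemma K_bound (N : ℕ) {t : ℝ} (h0 : 0 ≤ t) (h1 : t ≤ 1) : |K N t| ≤ 1 / (2*(N:ℝ)+1) := by
  have hnn : 0 ≤ K N t := by
    apply intervalIntegral.integral_nonneg h0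
    intro u hu
    exact div_nonneg (pow_nonneg hu.1 _) (by positivity)
  have hle : K N t ≤ ∫ s in (0:ℝ)..t, s ^ (2*N) := by
    apply intervalIntegral.integral_mono_on h0
      ((cont_aux _).intervalIntegrable _ _)
      ((continuous_pow _).intervalIntegrable _ _)
    intro x hx
    rw [div_le_iff₀ (by positivity)]
    nlinarith [mul_nonneg (pow_nonneg hx.1 (2*N)) (sq_nonneg x)]
  rw [integral_pow, zero_pow (by omega : 2*N+1 ≠ 0), sub_zero] at hle
  push_cast at hle
  rw [abs_of_nonneg hnn]
  have hp : t ^ (2*N+1) ≤ 1 := pow_le_one₀ h0 h1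
  calc K N t ≤ t^(2*N+1)/(2*(N:ℝ)+1) := hle
    _ ≤ 1/(2*(N:ℝ)+1) := by gcongr

end Stmt4Aux

theorem stmt4 :
    Real.pi ^ 2 / 16 = ∑' n : ℕ, (Real.log 2 - skewH n) / (2 * (n : ℝ) + 1) := by
  classical
  open Filter Stmt4Aux in
  set a : ℕ → ℝ := fun n => (Real.log 2 - skewH n) / (2 * (n : ℝ) + 1) with ha
  have haJ : ∀ n, a n = (-1)^n * (2 * Stmt4Aux.J n) / (2*(n:ℝ)+1) := by
    intro n
    rw [ha]
    simp only
    rw [Stmt4Aux.tail]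
  -- summability
  have hg : Summable (fun n : ℕ => 1/((n:ℝ)+1)^2) := by
    have h := (summable_nat_add_iff 1).mpr (summable_one_div_nat_pow.mpr one_lt_two)
    simpa using h
  have hsum : Summable a := by
    apply Summable.of_norm_bounded hg
    intro n
    have hJn := Stmt4Aux.J_nonneg n
    have hJl := Stmt4Aux.J_le n
    rw [le_div_iff₀ (by positivity : (0:ℝ) < 2*(n:ℝ)+2)] at hJl
    have hd : (0:ℝ) < 2*(n:ℝ)+1 := by positivity
    rw [haJ n, Real.norm_eq_abs, abs_div, abs_mul, abs_pow, abs_neg, abs_one, one_pow, one_mul,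
        abs_of_nonneg (by linarith : (0:ℝ) ≤ 2*Stmt4Aux.J n), abs_of_pos hd,
        div_le_div_iff₀ hd (by positivity)]
    have hn0 : (0:ℝ) ≤ (n:ℝ) := Nat.cast_nonneg n
    nlinarith [hJl, hJn, hn0]
  -- the limit integral
  have hcont : Continuous fun t : ℝ => 2 * Real.arctan t / (1+t^2) := by
    apply Continuous.div (continuous_const.mul Real.continuous_arctan) (by continuity)
    intro t; positivity
  have hI : (∫ t in (0:ℝ)..1, 2 * Real.arctan t / (1+t^2)) = Real.pi^2/16 := by
    have hF : ∀ t ∈ Set.uIcc (0:ℝ) 1, HasDerivAt (fun t => Real.arctan t ^ 2)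
        (2 * Real.arctan t / (1+t^2)) t := by
      intro t _
      have h := (Real.hasDerivAt_arctan t).pow 2
      refine h.congr_deriv ?_
      norm_num
      ring
    rw [intervalIntegral.integral_eq_sub_of_hasDerivAt hF (hcont.intervalIntegrable _ _),
        Real.arctan_one, Real.arctan_zero]
    ring
  -- key bound on partial sums
  have key : ∀ N : ℕ, ‖∑ n ∈ Finset.range N, a n - Real.pi^2/16‖ ≤ 2/(2*(N:ℝ)+1) := by
    intro N
    set P : ℝ → ℝ := fun t => ∑ n ∈ Finset.range N, ((-1)^n * 2 / (2*(n:ℝ)+1)) * (t^(2*n+1)/(1+t^2)) with hP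
    have hPc : Continuous P := by
      apply continuous_finset_sum
      intro n _
      exact continuous_const.mul (Stmt4Aux.cont_aux _)
    have hps : ∑ n ∈ Finset.range N, a n = ∫ t in (0:ℝ)..1, P t := by
      rw [hP]
      beta_reduce
      rw [intervalIntegral.integral_finset_sum
        (f := fun (n : ℕ) (t : ℝ) => ((-1:ℝ)^n * 2 / (2*(n:ℝ)+1)) * (t^(2*n+1)/(1+t^2)))
        (fun n _ => (continuous_const.mul (Stmt4Aux.cont_aux (2*n+1))).intervalIntegrable _ _)]
      apply Finset.sum_congr rfl
      intro n _
      rw [intervalIntegral.integral_const_mul, haJ n]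
      rw [show (∫ t in (0:ℝ)..1, t^(2*n+1)/(1+t^2)) = Stmt4Aux.J n from rfl]
      ring
    have hsub : (∫ t in (0:ℝ)..1, (P t - 2 * Real.arctan t / (1+t^2)))
        = ∑ n ∈ Finset.range N, a n - Real.pi^2/16 := by
      rw [intervalIntegral.integral_sub (hPc.intervalIntegrable _ _)
          (hcont.intervalIntegrable _ _), ← hps, hI]
    have hbound : ∀ t ∈ Set.uIoc (0:ℝ) 1,
        ‖P t - 2 * Real.arctan t / (1+t^2)‖ ≤ 2/(2*(N:ℝ)+1) := by
      intro t ht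
      rw [Set.uIoc_of_le zero_le_one] at ht
      have h0 : 0 ≤ t := le_of_lt ht.1
      have h1 : t ≤ 1 := ht.2
      have hden : (0:ℝ) < 1 + t^2 := by positivity
      have hsumeq : P t = (2/(1+t^2)) * ∑ n ∈ Finset.range N, (-1)^n * t^(2*n+1) / (2*(n:ℝ)+1) := by
        rw [hP, Finset.mul_sum]
        apply Finset.sum_congr rfl
        intro n _
        have hdn : (0:ℝ) < 2*(n:ℝ)+1 := by positivity
        field_simp
      have halg : P t - 2 * Real.arctan t / (1+t^2)
          = -((2/(1+t^2)) * ((-1)^N * Stmt4Aux.K N t)) := by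
        rw [hsumeq, Stmt4Aux.arctan_eq N t]
        field_simp
        ring
      rw [halg, norm_neg, norm_mul]
      have e1 : ‖(2:ℝ)/(1+t^2)‖ ≤ 2 := by
        rw [Real.norm_eq_abs, abs_of_pos (by positivity), div_le_iff₀ hden]
        nlinarith
      have e2 : ‖((-1:ℝ))^N * Stmt4Aux.K N t‖ ≤ 1/(2*(N:ℝ)+1) := by
        rw [norm_mul, norm_pow, norm_neg, norm_one, one_pow, one_mul, Real.norm_eq_abs]
        exact Stmt4Aux.K_bound N h0 h1
      calc ‖(2:ℝ)/(1+t^2)‖ * ‖((-1:ℝ))^N * Stmt4Aux.K N t‖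
          ≤ 2 * (1/(2*(N:ℝ)+1)) := by
            apply mul_le_mul e1 e2 (norm_nonneg _) (by norm_num)
        _ = 2/(2*(N:ℝ)+1) := by ring
    have hest := intervalIntegral.norm_integral_le_of_norm_le_const hbound
    rw [hsub] at hest
    simpa using hest
  have htend : Filter.Tendsto (fun N => ∑ n ∈ Finset.range N, a n) Filter.atTop (nhds (Real.pi^2/16)) := by
    rw [← tendsto_sub_nhds_zero_iff]
    apply squeeze_zero_norm key
    apply Filter.Tendsto.div_atTop (tendsto_const_nhds (x := (2:ℝ)))
    apply Filter.tendsto_atTop_add_const_right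
    exact (tendsto_natCast_atTop_atTop).const_mul_atTop two_pos
  exact tendsto_nhds_unique htend hsum.hasSum.tendsto_sum_nat
end

section
/- π³ = 192 ∑_{n=1}^∞ (hₙ/n)(∑_{k=1}^n (-1)^{k-1}/(2k-1) - π/4), where hₙ = ∑_{k=1}^n 1/(2k-1). -/
set_option maxHeartbeats 1000000

open Real MeasureTheory

noncomputable def oddH (n : ℕ) : ℝ := ∑ k ∈ Finset.range n, 1 / (2 * (k : ℝ) + 1)

lemma oddH_nonneg (m : ℕ) : 0 ≤ oddH m := by
  apply Finset.sum_nonneg; intro k _; positivity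

lemma oddH_le (m : ℕ) : oddH m ≤ 2 * Real.sqrt m := by
  induction m with
  | zero => simp [oddH]
  | succ n ih =>
    have h1 : oddH (n + 1) = oddH n + 1 / (2 * (n : ℝ) + 1) := by
      simp [oddH, Finset.sum_range_succ]
    set s := Real.sqrt n with hsdef
    set t := Real.sqrt (n + 1 : ℕ) with htdef
    have hs : s ^ 2 = (n : ℝ) := Real.sq_sqrt (by positivity)
    have ht : t ^ 2 = ((n : ℝ) + 1) := by
      rw [htdef, Real.sq_sqrt] <;> push_cast <;> [skip; positivity]; ring
    have hs0 : 0 ≤ s := Real.sqrt_nonneg _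
    have ht0 : 0 ≤ t := Real.sqrt_nonneg _
    have hn : (0:ℝ) < 2 * (n:ℝ) + 1 := by positivity
    have ht1 : (1:ℝ) ≤ t := by nlinarith
    have hv : 0 < t + s := by linarith
    have huv : t - s = 1 / (t + s) := by
      rw [eq_div_iff (ne_of_gt hv)]; nlinarith
    have key : 1 / (2 * (n:ℝ) + 1) ≤ 2 * (t - s) := by
      rw [huv, ← mul_div_assoc, div_le_div_iff₀ hn hv]
      nlinarith [sq_nonneg (s - 1), sq_nonneg (t - 1)]
    rw [h1]; linarith
lemma tail_eq (n : ℕ) :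
    (∑ k ∈ Finset.range (n + 1), (-1 : ℝ) ^ k / (2 * (k : ℝ) + 1)) - Real.pi / 4
      = (-1) ^ n * ∫ x in (0:ℝ)..1, x ^ (2 * n + 2) / (1 + x ^ 2) := by
  have hcont : ∀ m : ℕ, Continuous (fun x : ℝ => x ^ m / (1 + x ^ 2)) := by
    intro m
    exact (continuous_pow m).div (by continuity) (fun x => by positivity)
  have hsum : (∑ k ∈ Finset.range (n + 1), (-1 : ℝ) ^ k / (2 * (k : ℝ) + 1))
      = ∫ x in (0:ℝ)..1, ∑ k ∈ Finset.range (n + 1), ((-1 : ℝ) ^ k * x ^ (2 * k)) := by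
    rw [intervalIntegral.integral_finset_sum]
    · apply Finset.sum_congr rfl
      intro k _
      rw [intervalIntegral.integral_const_mul, integral_pow]
      push_cast
      ring
    · intro k _
      exact (Continuous.intervalIntegrable (by continuity) _ _)
  have hpt : ∀ x : ℝ, (∑ k ∈ Finset.range (n + 1), ((-1 : ℝ) ^ k * x ^ (2 * k)))
      = 1 / (1 + x ^ 2) + (-1) ^ n * (x ^ (2 * n + 2) / (1 + x ^ 2)) := by
    intro x
    have hr : (-x ^ 2 : ℝ) ≠ 1 := by nlinarith [sq_nonneg x]
    have hgeom := geom_sum_eq hr (n + 1)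
    have h2 : ∀ k : ℕ, (-x ^ 2 : ℝ) ^ k = (-1) ^ k * x ^ (2 * k) := by
      intro k; rw [neg_pow, pow_mul]
    simp_rw [h2] at hgeom
    rw [hgeom]
    have hden : (1 + x ^ 2 : ℝ) ≠ 0 := by positivity
    have hden2 : (-x ^ 2 - 1 : ℝ) ≠ 0 := by nlinarith [sq_nonneg x]
    field_simp
    ring
  simp_rw [hsum, hpt]
  rw [intervalIntegral.integral_add ((Continuous.intervalIntegrable (by
        exact continuous_const.div (by continuity) (fun x => by positivity)) _ _))
      ((continuous_const.fun_mul (hcont (2*n+2))).intervalIntegrable _ _),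
    intervalIntegral.integral_const_mul, integral_one_div_one_add_sq, arctan_one, arctan_zero]
  ring

lemma summable_norm_arctan_term {x : ℝ} (hx : |x| < 1) :
    Summable fun j : ℕ => ‖(-1 : ℝ) ^ j * x ^ (2 * j + 1) / (2 * j + 1 : ℕ)‖ := by
  apply Summable.of_nonneg_of_le (fun j => norm_nonneg _) (f := fun j => (x ^ 2) ^ j)
  · intro j
    have h0 : ‖(-1:ℝ)^j * x^(2*j+1) / ((2*j+1:ℕ):ℝ)‖ ≤ |x| ^ (2*j+1) := by
      rw [norm_div, norm_mul, norm_pow, norm_pow, norm_neg, norm_one, one_pow, one_mul,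
        Real.norm_eq_abs, Real.norm_eq_abs]
      have h1 : (1:ℝ) ≤ |((2*j+1:ℕ):ℝ)| := by
        rw [Nat.abs_cast]; exact_mod_cast Nat.succ_le_of_lt (Nat.pos_of_ne_zero (by omega))
      exact div_le_self (by positivity) h1
    refine h0.trans ?_
    calc |x| ^ (2*j+1) = (x^2)^j * |x| := by rw [pow_add, pow_mul, pow_one, sq_abs]
      _ ≤ (x^2)^j * 1 := mul_le_mul_of_nonneg_left hx.le (by positivity)
      _ = (x^2)^j := mul_one _
  · exact summable_geometric_of_lt_one (by positivity) (by nlinarith [abs_nonneg x, sq_abs x])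

lemma inner_sum_eq (x : ℝ) (n : ℕ) :
    (∑ k ∈ Finset.range (n + 1),
        ((-1 : ℝ) ^ k * x ^ (2 * k + 1) / (2 * k + 1 : ℕ)) *
        ((-1 : ℝ) ^ (n - k) * x ^ (2 * (n - k) + 1) / (2 * (n - k) + 1 : ℕ)))
      = ((-1) ^ n * (oddH (n + 1) / (n + 1))) * x ^ (2 * n + 2) := by
  have step : ∀ k ∈ Finset.range (n + 1),
      ((-1 : ℝ) ^ k * x ^ (2 * k + 1) / (2 * k + 1 : ℕ)) *
        ((-1 : ℝ) ^ (n - k) * x ^ (2 * (n - k) + 1) / (2 * (n - k) + 1 : ℕ))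
      = (-1) ^ n * x ^ (2 * n + 2) *
          (1 / ((2 * (k:ℝ) + 1) * (2 * ((n:ℝ) - k) + 1))) := by
    intro k hk
    have hk' : k ≤ n := Nat.lt_succ_iff.mp (Finset.mem_range.mp hk)
    have e1 : (-1 : ℝ) ^ k * (-1 : ℝ) ^ (n - k) = (-1) ^ n := by
      rw [← pow_add]; congr 1; omega
    have e2 : x ^ (2 * k + 1) * x ^ (2 * (n - k) + 1) = x ^ (2 * n + 2) := by
      rw [← pow_add]; congr 1; omega
    have e3 : ((2 * (n - k) + 1 : ℕ) : ℝ) = 2 * ((n:ℝ) - k) + 1 := by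
      push_cast [Nat.cast_sub hk']; ring
    have e4 : ((2 * k + 1 : ℕ) : ℝ) = 2 * (k:ℝ) + 1 := by push_cast; ring
    rw [e3, e4, div_mul_div_comm,
      show (-1:ℝ)^k * x^(2*k+1) * ((-1:ℝ)^(n-k) * x^(2*(n-k)+1))
        = ((-1:ℝ)^k * (-1:ℝ)^(n-k)) * (x^(2*k+1) * x^(2*(n-k)+1)) from by ring, e1, e2]
    ring
  rw [Finset.sum_congr rfl step, ← Finset.mul_sum]
  have frac : ∀ k ∈ Finset.range (n + 1),
      (1 : ℝ) / ((2 * (k:ℝ) + 1) * (2 * ((n:ℝ) - k) + 1))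
        = 1 / (2 * (n:ℝ) + 2) * (1 / (2 * (k:ℝ) + 1) + 1 / (2 * ((n:ℝ) - k) + 1)) := by
    intro k hk
    have hk' : k ≤ n := Nat.lt_succ_iff.mp (Finset.mem_range.mp hk)
    have hkr : (k : ℝ) ≤ n := by exact_mod_cast hk'
    have h1 : (0:ℝ) < 2 * (k:ℝ) + 1 := by positivity
    have h2 : (0:ℝ) < 2 * ((n:ℝ) - k) + 1 := by linarith
    have h3 : (0:ℝ) < 2 * (n:ℝ) + 2 := by positivity
    field_simp
    ring
  rw [Finset.sum_congr rfl frac, ← Finset.mul_sum, Finset.sum_add_distrib]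
  have hrefl : ∑ k ∈ Finset.range (n + 1), (1:ℝ) / (2 * ((n:ℝ) - k) + 1) = oddH (n + 1) := by
    rw [oddH, ← Finset.sum_range_reflect (fun j => (1:ℝ) / (2 * (j:ℝ) + 1)) (n+1)]
    apply Finset.sum_congr rfl
    intro k hk
    have hk' : k ≤ n := Nat.lt_succ_iff.mp (Finset.mem_range.mp hk)
    rw [show ((n + 1 - 1 - k : ℕ) : ℝ) = (n:ℝ) - k from by
      rw [show n + 1 - 1 - k = n - k from by omega, Nat.cast_sub hk']]
  have hrefl2 : ∑ k ∈ Finset.range (n + 1), (1:ℝ) / (2 * (k:ℝ) + 1) = oddH (n + 1) := rfl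
  rw [hrefl, hrefl2]
  have hne : ((n:ℝ) + 1) ≠ 0 := by positivity
  field_simp
  ring

lemma tsum_sq {x : ℝ} (hx : |x| < 1) :
    ∑' n : ℕ, ((-1 : ℝ) ^ n * (oddH (n + 1) / (n + 1))) * x ^ (2 * n + 2)
      = Real.arctan x ^ 2 := by
  have hs := summable_norm_arctan_term hx
  have h := tsum_mul_tsum_eq_tsum_sum_range_of_summable_norm hs hs
  rw [(Real.hasSum_arctan (by rwa [Real.norm_eq_abs])).tsum_eq] at h
  rw [sq, h]
  exact (tsum_congr (fun n => (inner_sum_eq x n))).symm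

noncomputable def cc (n : ℕ) : ℝ := (-1) ^ n * (oddH (n + 1) / ((n : ℝ) + 1))

noncomputable def FF (n : ℕ) (x : ℝ) : ℝ := cc n * (x ^ (2 * n + 2) / (1 + x ^ 2))

lemma FF_cont (n : ℕ) : Continuous (FF n) :=
  continuous_const.mul ((continuous_pow _).div (by continuity) (fun x => by positivity))

lemma FF_integrableOn (n : ℕ) : IntegrableOn (FF n) (Set.Ioo (0:ℝ) 1) :=
  ((FF_cont n).integrableOn_Icc).mono_set Set.Ioo_subset_Icc_self

lemma pow_integral (m : ℕ) : ∫ x in Set.Ioo (0:ℝ) 1, x ^ m = 1 / ((m : ℝ) + 1) := by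
  rw [← MeasureTheory.integral_Ioc_eq_integral_Ioo,
    ← intervalIntegral.integral_of_le (by norm_num : (0:ℝ) ≤ 1), integral_pow]
  norm_num

lemma FF_norm_int_le (n : ℕ) :
    ∫ x in Set.Ioo (0:ℝ) 1, ‖FF n x‖ ≤ |cc n| * (1 / (2 * (n:ℝ) + 3)) := by
  have h1 : ∫ x in Set.Ioo (0:ℝ) 1, ‖FF n x‖
      ≤ ∫ x in Set.Ioo (0:ℝ) 1, |cc n| * x ^ (2 * n + 2) := by
    apply setIntegral_mono_on ((FF_cont n).norm.integrableOn_Icc.mono_set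
      Set.Ioo_subset_Icc_self)
      ((continuous_const.mul (continuous_pow _)).integrableOn_Icc.mono_set
        Set.Ioo_subset_Icc_self) measurableSet_Ioo
    intro x hx
    obtain ⟨hx0, hx1⟩ := hx
    rw [FF, norm_mul, Real.norm_eq_abs, Real.norm_eq_abs]
    apply mul_le_mul_of_nonneg_left _ (abs_nonneg _)
    rw [abs_div, abs_pow, abs_of_pos hx0, abs_of_pos (by positivity : (0:ℝ) < 1 + x ^ 2)]
    calc x ^ (2*n+2) / (1 + x ^ 2) ≤ x ^ (2*n+2) / 1 :=
          div_le_div_of_nonneg_left (by positivity) one_pos (by nlinarith [sq_nonneg x])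
      _ = x ^ (2*n+2) := div_one _
  rw [MeasureTheory.integral_const_mul, pow_integral] at h1
  convert h1 using 3
  push_cast; ring

lemma FF_summable_norm_int :
    Summable fun n : ℕ => ∫ x in Set.Ioo (0:ℝ) 1, ‖FF n x‖ := by
  have hb : Summable fun n : ℕ => (((n:ℝ) + 1) ^ ((3:ℝ)/2))⁻¹ := by
    have h0 : Summable fun n : ℕ => (((n:ℝ)) ^ ((3:ℝ)/2))⁻¹ :=
      Real.summable_nat_rpow_inv.mpr (by norm_num)
    have := (summable_nat_add_iff 1).mpr h0
    apply this.congr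
    intro n; push_cast; ring_nf
  apply Summable.of_nonneg_of_le
    (fun n => integral_nonneg (fun x => norm_nonneg _)) _ hb
  intro n
  refine (FF_norm_int_le n).trans ?_
  have hs : Real.sqrt ((n:ℝ)+1) ^ 2 = (n:ℝ)+1 := Real.sq_sqrt (by positivity)
  have hs0 : 0 < Real.sqrt ((n:ℝ)+1) := Real.sqrt_pos.mpr (by positivity)
  have hcc : |cc n| ≤ 2 * Real.sqrt ((n:ℝ)+1) / ((n:ℝ)+1) := by
    rw [cc, abs_mul, abs_pow, abs_neg, abs_one, one_pow, one_mul,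
      abs_div, abs_of_nonneg (oddH_nonneg _), abs_of_pos (by positivity : (0:ℝ) < (n:ℝ)+1)]
    apply div_le_div_of_nonneg_right _ (by positivity)
    have := oddH_le (n+1)
    rwa [show ((n+1:ℕ):ℝ) = (n:ℝ)+1 from by push_cast; ring] at this
  have hrw : (((n:ℝ) + 1) ^ ((3:ℝ)/2))⁻¹ = (((n:ℝ)+1) * Real.sqrt ((n:ℝ)+1))⁻¹ := by
    rw [show ((3:ℝ)/2) = 1 + 1/2 by norm_num, Real.rpow_add (by positivity), Real.rpow_one,
      ← Real.sqrt_eq_rpow]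
  rw [hrw]
  have h2 : |cc n| * (1 / (2 * (n:ℝ) + 3))
      ≤ (2 * Real.sqrt ((n:ℝ)+1) / ((n:ℝ)+1)) * (1 / (2 * (n:ℝ) + 3)) := by
    apply mul_le_mul_of_nonneg_right hcc (by positivity)
  refine h2.trans ?_
  rw [div_mul_div_comm, mul_one, div_le_iff₀ (by positivity), inv_mul_eq_div,
    le_div_iff₀ (by positivity)]
  nlinarith [hs, hs0]

lemma key_int_s7 : ∫ x in (0:ℝ)..1, Real.arctan x ^ 2 / (1 + x ^ 2) = Real.pi ^ 3 / 192 := by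
  have hder : ∀ x ∈ Set.uIcc (0:ℝ) 1,
      HasDerivAt (fun y => Real.arctan y ^ 3 / 3) (Real.arctan x ^ 2 / (1 + x ^ 2)) x := by
    intro x _
    have h : HasDerivAt (fun y => Real.arctan y ^ 3 / 3)
        (((3:ℕ):ℝ) * Real.arctan x ^ (3 - 1) * (1 / (1 + x ^ 2)) / 3) x :=
      ((Real.hasDerivAt_arctan x).fun_pow 3).div_const 3
    convert h using 1
    norm_num
    ring
  rw [intervalIntegral.integral_eq_sub_of_hasDerivAt hder
    (Continuous.intervalIntegrable
      (((Real.continuous_arctan.pow 2).div (by continuity) (fun x => by positivity))) _ _)]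
  rw [Real.arctan_one, Real.arctan_zero]
  ring

theorem stmt7 :
    Real.pi ^ 3 =
      192 * ∑' n : ℕ, (oddH (n + 1) / ((n : ℝ) + 1)) *
        ((∑ k ∈ Finset.range (n + 1), (-1) ^ k / (2 * (k : ℝ) + 1)) - Real.pi / 4) := by
  have hterm : ∀ n : ℕ, (oddH (n + 1) / ((n : ℝ) + 1)) *
        ((∑ k ∈ Finset.range (n + 1), (-1) ^ k / (2 * (k : ℝ) + 1)) - Real.pi / 4)
      = ∫ x in Set.Ioo (0:ℝ) 1, FF n x := by
    intro n
    rw [tail_eq n]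
    have : ∫ x in Set.Ioo (0:ℝ) 1, FF n x
        = cc n * ∫ x in Set.Ioo (0:ℝ) 1, x ^ (2 * n + 2) / (1 + x ^ 2) := by
      rw [← MeasureTheory.integral_const_mul]; rfl
    rw [this, ← MeasureTheory.integral_Ioc_eq_integral_Ioo,
      ← intervalIntegral.integral_of_le (by norm_num : (0:ℝ) ≤ 1), cc]
    ring
  rw [tsum_congr hterm,
    MeasureTheory.integral_tsum_of_summable_integral_norm FF_integrableOn FF_summable_norm_int]
  have hpt : ∀ x ∈ Set.Ioo (0:ℝ) 1, (∑' n : ℕ, FF n x) = Real.arctan x ^ 2 / (1 + x ^ 2) := by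
    intro x hx
    obtain ⟨hx0, hx1⟩ := hx
    have hax : |x| < 1 := by rw [abs_of_pos hx0]; exact hx1
    have h1 : ∀ n : ℕ, FF n x
        = (((-1 : ℝ) ^ n * (oddH (n + 1) / (n + 1))) * x ^ (2 * n + 2)) / (1 + x ^ 2) := by
      intro n; rw [FF, cc]; ring
    rw [tsum_congr h1, tsum_div_const, tsum_sq hax]
  rw [MeasureTheory.setIntegral_congr_fun measurableSet_Ioo hpt,
    ← MeasureTheory.integral_Ioc_eq_integral_Ioo,
    ← intervalIntegral.integral_of_le (by norm_num : (0:ℝ) ≤ 1), key_int_s7]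
  ring
end

section
/- For every real α with 0 < α < 1, ∫₀^∞ log(1+αx)/(x(1+x)) dx = log α · log(1-α) + Li₂(α). -/
open MeasureTheory Real

open Set Filter Topology

lemma innerT {α x : ℝ} (ha : 0 ≤ α) (hx : 0 < x) :
    ∫ t in Set.Ioc 0 α, ((1 + t * x) * (1 + x))⁻¹ =
      Real.log (1 + α * x) / (x * (1 + x)) := by
  have hx1 : (0:ℝ) < 1 + x := by linarith
  rw [← intervalIntegral.integral_of_le ha]
  have h1 : ∀ t ∈ Set.uIcc (0:ℝ) α,
      HasDerivAt (fun t => (x * (1 + x))⁻¹ * Real.log (1 + t * x))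
        ((1 + t * x) * (1 + x))⁻¹ t := by
    intro t ht
    rw [Set.uIcc_of_le ha] at ht
    have htx : (0:ℝ) < 1 + t * x := by nlinarith [ht.1]
    have : HasDerivAt (fun t : ℝ => 1 + t * x) x t := by
      simpa using ((hasDerivAt_id t).mul_const x).const_add 1
    have := ((this.log htx.ne')).const_mul (x * (1 + x))⁻¹
    refine this.congr_deriv ?_
    field_simp
  have h2 : IntervalIntegrable (fun t : ℝ => ((1 + t * x) * (1 + x))⁻¹) volume 0 α := by
    apply ContinuousOn.intervalIntegrable
    intro t ht
    rw [Set.uIcc_of_le ha] at ht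
    have htx : (0:ℝ) < 1 + t * x := by nlinarith [ht.1]
    exact (ContinuousWithinAt.mul
      (((continuousWithinAt_id.mul continuousWithinAt_const).const_add 1))
      continuousWithinAt_const).inv₀ (by exact (show (0:ℝ) < (1 + t * x) * (1 + x) from mul_pos htx (by linarith)).ne')
  rw [intervalIntegral.integral_eq_sub_of_hasDerivAt h1 h2]
  simp [Real.log_one, div_eq_inv_mul, mul_comm]


lemma xDeriv {t : ℝ} (ht0 : 0 < t) (ht1 : t < 1) :
    ∀ x ∈ Set.Ici (0:ℝ), HasDerivAt
      (fun x => (1 - t)⁻¹ * (Real.log (1 + x) - Real.log (1 + t * x)))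
      ((1 + t * x) * (1 + x))⁻¹ x := by
  intro x hx
  have hx0 : (0:ℝ) ≤ x := hx
  have h1 : (0:ℝ) < 1 + x := by linarith
  have h2 : (0:ℝ) < 1 + t * x := by nlinarith
  have d1 : HasDerivAt (fun x : ℝ => Real.log (1 + x)) (1 + x)⁻¹ x := by
    simpa using (((hasDerivAt_id x).const_add 1).log h1.ne')
  have d2 : HasDerivAt (fun x : ℝ => Real.log (1 + t * x)) (t / (1 + t * x)) x := by
    have : HasDerivAt (fun x : ℝ => 1 + t * x) t x := by
      simpa using ((hasDerivAt_id x).const_mul t).const_add 1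
    simpa using this.log h2.ne'
  have := (d1.sub d2).const_mul (1 - t)⁻¹
  refine this.congr_deriv ?_
  have h3 : (1:ℝ) - t ≠ 0 := by linarith
  field_simp
  ring

lemma xTendsto {t : ℝ} (ht0 : 0 < t) (ht1 : t < 1) :
    Tendsto (fun x => (1 - t)⁻¹ * (Real.log (1 + x) - Real.log (1 + t * x)))
      atTop (𝓝 ((1 - t)⁻¹ * (-Real.log t))) := by
  have key : Tendsto (fun x : ℝ => (1 + x) / (1 + t * x)) atTop (𝓝 t⁻¹) := by
    have h : Tendsto (fun x : ℝ => (x⁻¹ + 1) / (x⁻¹ + t)) atTop (𝓝 ((0 + 1) / (0 + t))) := by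
      exact (Tendsto.div (tendsto_inv_atTop_zero.add tendsto_const_nhds)
        (tendsto_inv_atTop_zero.add tendsto_const_nhds) (by simpa using ht0.ne'))
    simp only [zero_add] at h
    rw [show t⁻¹ = 1 / t by rw [one_div]]
    apply h.congr'
    filter_upwards [eventually_gt_atTop (0:ℝ)] with x hx
    have hd : (0:ℝ) < 1 + t * x := by nlinarith
    rw [div_eq_div_iff (by positivity) (by positivity)]
    field_simp
  have hlog : Tendsto (fun x : ℝ => Real.log ((1 + x) / (1 + t * x))) atTop (𝓝 (-Real.log t)) := by
    have := (Real.continuousAt_log (by positivity : t⁻¹ ≠ 0)).tendsto.comp key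
    simpa [Real.log_inv, Function.comp_def] using this
  have := hlog.const_mul (1 - t)⁻¹
  apply this.congr'
  filter_upwards [eventually_ge_atTop (0:ℝ)] with x hx
  have h1 : (0:ℝ) < 1 + x := by linarith
  have h2 : (0:ℝ) < 1 + t * x := by nlinarith
  rw [Real.log_div h1.ne' h2.ne']

lemma innerX {t : ℝ} (ht0 : 0 < t) (ht1 : t < 1) :
    ∫ x in Set.Ioi (0:ℝ), ((1 + t * x) * (1 + x))⁻¹ = (1 - t)⁻¹ * (-Real.log t) := by
  have nonneg : ∀ x ∈ Set.Ioi (0:ℝ), (0:ℝ) ≤ ((1 + t * x) * (1 + x))⁻¹ := by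
    intro x hx
    have hx0 : (0:ℝ) < x := hx
    have : (0:ℝ) < 1 + t * x := by nlinarith
    positivity
  have := integral_Ioi_of_hasDerivAt_of_nonneg'
    (xDeriv ht0 ht1) nonneg (xTendsto ht0 ht1)
  simpa using this

lemma innerXInt {t : ℝ} (ht0 : 0 < t) (ht1 : t < 1) :
    IntegrableOn (fun x => ((1 + t * x) * (1 + x))⁻¹) (Set.Ioi (0:ℝ)) := by
  have nonneg : ∀ x ∈ Set.Ioi (0:ℝ), (0:ℝ) ≤ ((1 + t * x) * (1 + x))⁻¹ := by
    intro x hx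
    have hx0 : (0:ℝ) < x := hx
    have : (0:ℝ) < 1 + t * x := by nlinarith
    positivity
  exact integrableOn_Ioi_deriv_of_nonneg' (xDeriv ht0 ht1) nonneg (xTendsto ht0 ht1)


lemma tIntegrable {α : ℝ} (h0 : 0 < α) (h1 : α < 1) (n : ℕ) :
    IntegrableOn (fun t : ℝ => t ^ n * (-Real.log t)) (Set.Ioc 0 α) := by
  have hg : IntegrableOn (fun t : ℝ => 2 * t ^ (-(1:ℝ)/2)) (Set.Ioc 0 α) := by
    have := (intervalIntegral.intervalIntegrable_rpow' (a := 0) (b := α) (r := -(1:ℝ)/2) (by norm_num)).const_mul 2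
    rwa [intervalIntegrable_iff_integrableOn_Ioc_of_le h0.le] at this
  have hm : AEStronglyMeasurable (fun t : ℝ => t ^ n * (-Real.log t))
      (volume.restrict (Set.Ioc 0 α)) :=
    ((measurable_id.pow_const n).mul Real.measurable_log.neg).aestronglyMeasurable
  refine hg.mono' hm ?_
  rw [ae_restrict_iff' measurableSet_Ioc]
  filter_upwards with t ht
  have ht0 : 0 < t := ht.1
  have ht1 : t < 1 := lt_of_le_of_lt ht.2 h1
  have hlog : Real.log t ≤ 0 := Real.log_nonpos ht0.le ht1.le
  have htn : t ^ n ≤ 1 := pow_le_one₀ ht0.le ht1.le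
  have key : -Real.log t ≤ 2 * t ^ (-(1:ℝ)/2) := by
    have h2 : -Real.log t = 2 * Real.log (t ^ (-(1:ℝ)/2)) := by
      rw [Real.log_rpow ht0]; ring
    rw [h2]
    have h3 : Real.log (t ^ (-(1:ℝ)/2)) ≤ t ^ (-(1:ℝ)/2) - 1 :=
      Real.log_le_sub_one_of_pos (Real.rpow_pos_of_pos ht0 _)
    nlinarith [Real.rpow_pos_of_pos ht0 (-(1:ℝ)/2)]
  have hpos : (0:ℝ) ≤ t ^ (-(1:ℝ)/2) := (Real.rpow_pos_of_pos ht0 _).le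
  rw [Real.norm_eq_abs, abs_mul, abs_of_nonneg (pow_nonneg ht0.le n),
    abs_of_nonneg (by linarith : (0:ℝ) ≤ -Real.log t)]
  calc t ^ n * (-Real.log t) ≤ 1 * (-Real.log t) := by
        apply mul_le_mul_of_nonneg_right htn (by linarith)
    _ = -Real.log t := one_mul _
    _ ≤ 2 * t ^ (-(1:ℝ)/2) := key

lemma tIntegral {α : ℝ} (h0 : 0 < α) (h1 : α < 1) (n : ℕ) :
    ∫ t in Set.Ioc 0 α, t ^ n * (-Real.log t) =
      α ^ (n + 1) / ((n : ℝ) + 1) ^ 2 - α ^ (n + 1) * Real.log α / ((n : ℝ) + 1) := by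
  set G : ℝ → ℝ := fun t => t ^ (n + 1) * Real.log t / ((n : ℝ) + 1)
      - t ^ (n + 1) / ((n : ℝ) + 1) ^ 2 with hG
  have hn : ((n : ℝ) + 1) ≠ 0 := by positivity
  have hcont : ContinuousOn G (Set.Icc 0 α) := by
    intro t ht
    rcases eq_or_lt_of_le ht.1 with h | h
    · -- t = 0
      subst h
      have hG0 : G 0 = 0 := by simp [hG]
      apply ContinuousWithinAt.mono _ (Set.Icc_subset_Ici_self (a := α) (b := (0:ℝ)))
      rw [← continuousWithinAt_Ioi_iff_Ici]
      unfold ContinuousWithinAt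
      rw [hG0]
      have h1' : Tendsto (fun t : ℝ => Real.log t * t ^ ((n : ℝ) + 1)) (𝓝[>] 0) (𝓝 0) :=
        tendsto_log_mul_rpow_nhdsGT_zero (by positivity)
      have h2' : Tendsto (fun t : ℝ => t ^ (n + 1) * Real.log t / ((n : ℝ) + 1)) (𝓝[>] 0)
          (𝓝 0) := by
        have := h1'.div_const ((n : ℝ) + 1)
        rw [zero_div] at this
        apply this.congr'
        filter_upwards [self_mem_nhdsWithin] with t (ht : (0:ℝ) < t)
        rw [← Real.rpow_natCast t (n+1)]
        push_cast
        ring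
      have h3' : Tendsto (fun t : ℝ => t ^ (n + 1) / ((n : ℝ) + 1) ^ 2) (𝓝[>] 0) (𝓝 0) := by
        have : ContinuousAt (fun t : ℝ => t ^ (n + 1) / ((n : ℝ) + 1) ^ 2) 0 := by fun_prop
        have := this.tendsto.mono_left (nhdsWithin_le_nhds (s := Set.Ioi (0:ℝ)))
        simpa using this
      simpa [hG] using h2'.sub h3'
    · -- t > 0
      exact (ContinuousAt.continuousWithinAt (by
        have : ContinuousAt Real.log t := Real.continuousAt_log h.ne'
        fun_prop (disch := exact h.ne')))
  have hderiv : ∀ t ∈ Set.Ioo (0:ℝ) α, HasDerivWithinAt G (t ^ n * Real.log t) (Set.Ioi t) t := by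
    intro t ht
    have ht0 : (0:ℝ) < t := ht.1
    have d1 : HasDerivAt (fun t : ℝ => t ^ (n + 1) * Real.log t)
        (((n : ℝ) + 1) * t ^ n * Real.log t + t ^ n) t := by
      have := (hasDerivAt_pow (n + 1) t).mul (Real.hasDerivAt_log ht0.ne')
      refine this.congr_deriv ?_
      push_cast
      field_simp
      ring
    have := ((d1.div_const ((n : ℝ) + 1)).sub ((hasDerivAt_pow (n + 1) t).div_const
      (((n : ℝ) + 1) ^ 2)))
    have h2 : (((n : ℝ) + 1) * t ^ n * Real.log t + t ^ n) / ((n : ℝ) + 1)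
        - (↑(n + 1) * t ^ (n + 1 - 1)) / ((n : ℝ) + 1) ^ 2 = t ^ n * Real.log t := by
      push_cast
      field_simp
      ring
    rw [h2] at this
    exact this.hasDerivWithinAt
  have hint : IntervalIntegrable (fun t : ℝ => t ^ n * Real.log t) volume 0 α := by
    rw [intervalIntegrable_iff_integrableOn_Ioc_of_le h0.le]
    exact ((tIntegrable h0 h1 n).neg.congr (Filter.Eventually.of_forall fun t => by show -(t ^ n * -Real.log t) = _; ring))
  have := intervalIntegral.integral_eq_sub_of_hasDeriv_right_of_le h0.le hcont hderiv hint
  rw [intervalIntegral.integral_of_le h0.le] at this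
  have hsplit : ∫ t in Set.Ioc 0 α, t ^ n * (-Real.log t)
      = - ∫ t in Set.Ioc 0 α, t ^ n * Real.log t := by
    rw [← integral_neg]
    congr 1 with t
    ring
  rw [hsplit, this]
  simp only [hG]
  simp [Real.log_zero]


lemma innerTInt {α x : ℝ} (ha : 0 ≤ α) (hx : 0 < x) :
    IntegrableOn (fun t : ℝ => ((1 + t * x) * (1 + x))⁻¹) (Set.Ioc 0 α) := by
  rw [← intervalIntegrable_iff_integrableOn_Ioc_of_le ha]
  apply ContinuousOn.intervalIntegrable
  intro t ht
  rw [Set.uIcc_of_le ha] at ht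
  have htx : (0:ℝ) < 1 + t * x := by nlinarith [ht.1]
  exact (ContinuousWithinAt.mul
    (((continuousWithinAt_id.mul continuousWithinAt_const).const_add 1))
    continuousWithinAt_const).inv₀ (by exact (show (0:ℝ) < (1 + t * x) * (1 + x) from mul_pos htx (by linarith)).ne')

lemma sumEval {α : ℝ} (h0 : 0 < α) (h1 : α < 1) :
    HasSum (fun n : ℕ => α ^ (n + 1) / ((n : ℝ) + 1) ^ 2
        - α ^ (n + 1) * Real.log α / ((n : ℝ) + 1))
      (Real.log α * Real.log (1 - α) + Li2 α) := by
  have habs : |α| < 1 := by rw [abs_of_pos h0]; exact h1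
  have hsum1 : Summable (fun n : ℕ => α ^ (n + 1) / ((n : ℝ) + 1) ^ 2) := by
    apply Summable.of_nonneg_of_le (fun n => by positivity)
      (fun n => ?_) (summable_geometric_of_lt_one h0.le h1)
    calc α ^ (n + 1) / ((n : ℝ) + 1) ^ 2 ≤ α ^ (n + 1) / 1 := by
          apply div_le_div_of_nonneg_left (by positivity) one_pos ?_
          · nlinarith [Nat.cast_nonneg (α := ℝ) n]
      _ = α ^ (n + 1) := div_one _
      _ ≤ α ^ n := pow_le_pow_of_le_one h0.le h1.le (Nat.le_succ n)
  have h₁ : HasSum (fun n : ℕ => α ^ (n + 1) / ((n : ℝ) + 1) ^ 2) (Li2 α) := hsum1.hasSum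
  have h₂ : HasSum (fun n : ℕ => α ^ (n + 1) / ((n : ℝ) + 1)) (-Real.log (1 - α)) :=
    hasSum_pow_div_log_of_abs_lt_one habs
  have h₃ := h₂.mul_left (-Real.log α)
  have := h₁.add h₃
  convert this using 1
  · funext n
    ring
  · ring

theorem stmt8 (α : ℝ) (h0 : 0 < α) (h1 : α < 1) :
    ∫ x in Set.Ioi (0 : ℝ), Real.log (1 + α * x) / (x * (1 + x)) =
      Real.log α * Real.log (1 - α) + Li2 α := by
  have hfm : AEStronglyMeasurable (fun x : ℝ => Real.log (1 + α * x) / (x * (1 + x)))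
      (volume.restrict (Set.Ioi 0)) := by
    apply Measurable.aestronglyMeasurable
    apply Measurable.div
    · exact Real.measurable_log.comp (measurable_const.add (measurable_id.const_mul α))
    · exact measurable_id.mul (measurable_const.add measurable_id)
  have hfnn : 0 ≤ᵐ[volume.restrict (Set.Ioi 0)]
      (fun x : ℝ => Real.log (1 + α * x) / (x * (1 + x))) := by
    refine (ae_restrict_iff' measurableSet_Ioi).mpr ?_
    filter_upwards with x hx
    have hx0 : (0:ℝ) < x := hx
    have hl : 0 ≤ Real.log (1 + α * x) := Real.log_nonneg (by nlinarith)
    positivity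
  rw [integral_eq_lintegral_of_nonneg_ae hfnn hfm]
  have step1 : ∫⁻ x in Set.Ioi (0:ℝ),
        ENNReal.ofReal (Real.log (1 + α * x) / (x * (1 + x)))
      = ∫⁻ x in Set.Ioi (0:ℝ), ∫⁻ t in Set.Ioc (0:ℝ) α,
          ENNReal.ofReal (((1 + t * x) * (1 + x))⁻¹) := by
    apply setLIntegral_congr_fun measurableSet_Ioi
    intro x hx
    beta_reduce
    have hx0 : (0:ℝ) < x := hx
    rw [← ofReal_integral_eq_lintegral_ofReal (innerTInt h0.le hx0) ?_, innerT h0.le hx0]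
    refine (ae_restrict_iff' measurableSet_Ioc).mpr ?_
    filter_upwards with t ht
    have : (0:ℝ) < 1 + t * x := by nlinarith [ht.1]
    positivity
  rw [step1]
  have meas : Measurable (Function.uncurry fun (x t : ℝ) =>
      ENNReal.ofReal (((1 + t * x) * (1 + x))⁻¹)) := by
    apply ENNReal.measurable_ofReal.comp
    apply Measurable.inv
    fun_prop
  rw [lintegral_lintegral_swap meas.aemeasurable]
  have step3 : ∫⁻ t in Set.Ioc (0:ℝ) α, ∫⁻ x in Set.Ioi (0:ℝ),
        ENNReal.ofReal (((1 + t * x) * (1 + x))⁻¹)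
      = ∫⁻ t in Set.Ioc (0:ℝ) α, ∑' n : ℕ, ENNReal.ofReal (t ^ n * (-Real.log t)) := by
    apply setLIntegral_congr_fun measurableSet_Ioc
    intro t ht
    beta_reduce
    have ht0 : (0:ℝ) < t := ht.1
    have ht1 : t < 1 := lt_of_le_of_lt ht.2 h1
    have hlog : Real.log t ≤ 0 := Real.log_nonpos ht0.le ht1.le
    rw [← ofReal_integral_eq_lintegral_ofReal (innerXInt ht0 ht1) ?_, innerX ht0 ht1]
    · have hser : (1 - t)⁻¹ * (-Real.log t) = ∑' n : ℕ, t ^ n * (-Real.log t) := by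
        rw [tsum_mul_right, tsum_geometric_of_lt_one ht0.le ht1]
      rw [hser]
      exact ENNReal.ofReal_tsum_of_nonneg
        (fun n => mul_nonneg (by positivity) (by linarith))
        ((summable_geometric_of_lt_one ht0.le ht1).mul_right _)
    · refine (ae_restrict_iff' measurableSet_Ioi).mpr ?_
      filter_upwards with x hx
      have hx0 : (0:ℝ) < x := hx
      have : (0:ℝ) < 1 + t * x := by nlinarith
      positivity
  rw [step3]
  rw [lintegral_tsum (f := fun (n : ℕ) (t : ℝ) => ENNReal.ofReal (t ^ n * (-Real.log t)))
    (fun n => ((measurable_id.pow_const n).mul Real.measurable_log.neg).ennreal_ofReal.aemeasurable)]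
  have step4 : ∀ n : ℕ, ∫⁻ t in Set.Ioc (0:ℝ) α, ENNReal.ofReal (t ^ n * (-Real.log t))
      = ENNReal.ofReal (α ^ (n + 1) / ((n : ℝ) + 1) ^ 2
          - α ^ (n + 1) * Real.log α / ((n : ℝ) + 1)) := by
    intro n
    rw [← ofReal_integral_eq_lintegral_ofReal (tIntegrable h0 h1 n) ?_, tIntegral h0 h1 n]
    refine (ae_restrict_iff' measurableSet_Ioc).mpr ?_
    filter_upwards with t ht
    have ht0 : (0:ℝ) < t := ht.1
    have ht1 : t < 1 := lt_of_le_of_lt ht.2 h1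
    have hlog : Real.log t ≤ 0 := Real.log_nonpos ht0.le ht1.le
    have : 0 ≤ -Real.log t := by linarith
    positivity
  simp_rw [step4]
  have hS := sumEval h0 h1
  rw [← ENNReal.ofReal_tsum_of_nonneg ?_ hS.summable]
  · rw [hS.tsum_eq, ENNReal.toReal_ofReal ?_]
    have hLi2 : 0 ≤ Li2 α := tsum_nonneg (fun n => by positivity)
    have hl1 : Real.log α ≤ 0 := Real.log_nonpos h0.le h1.le
    have hl2 : Real.log (1 - α) ≤ 0 := Real.log_nonpos (by linarith) (by linarith)
    nlinarith
  · intro n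
    have hl1 : Real.log α ≤ 0 := Real.log_nonpos h0.le h1.le
    have hl1' : (0:ℝ) ≤ -Real.log α := by linarith
    have h2 : 0 ≤ α ^ (n+1) * -Real.log α / ((n:ℝ)+1) :=
      div_nonneg (mul_nonneg (by positivity) hl1') (by positivity)
    have h3 : 0 ≤ α ^ (n+1) / ((n:ℝ)+1)^2 := by positivity
    have h4 : α ^ (n+1) * -Real.log α / ((n:ℝ)+1)
        = -(α ^ (n+1) * Real.log α / ((n:ℝ)+1)) := by ring
    linarith [h2, h3]
end

section
/- For every real α with -1 < α ≤ 1, ∫₀¹ log(1+αx)/(x(1+x)) dx = Li₂(1/2) - Li₂((1-α)/2). -/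
open MeasureTheory Real Set

lemma li2_hasDerivAt {y : ℝ} (hy : |y| < 1) :
    HasDerivAt Li2 (∑' n : ℕ, y ^ n / ((n : ℝ) + 1)) y := by
  set r : ℝ := (1 + |y|) / 2 with hr
  have hr1 : r < 1 := by rw [hr]; linarith
  have hr0 : (0:ℝ) ≤ r := by positivity
  have hyr : |y| < r := by rw [hr]; linarith [abs_nonneg y]
  have key := hasDerivAt_tsum_of_isPreconnected
    (u := fun n : ℕ => r ^ n)
    (g := fun (n : ℕ) (z : ℝ) => z ^ (n + 1) / ((n : ℝ) + 1) ^ 2)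
    (g' := fun (n : ℕ) (z : ℝ) => z ^ n / ((n : ℝ) + 1))
    (summable_geometric_of_lt_one hr0 hr1)
    (isOpen_Ioo (a := -r) (b := r)) (convex_Ioo _ _).isPreconnected
    (fun n z _ => by
      have h := (hasDerivAt_pow (n + 1) z).div_const (((n : ℝ) + 1) ^ 2)
      refine h.congr_deriv ?_
      have : ((n : ℝ) + 1) ≠ 0 := by positivity
      push_cast
      field_simp)
    (fun n z hz => by
      have hz' : |z| ≤ r := by
        rw [abs_le]; exact ⟨hz.1.le, hz.2.le⟩
      have h1 : (1:ℝ) ≤ (n : ℝ) + 1 := by linarith [Nat.cast_nonneg (α := ℝ) n]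
      rw [norm_eq_abs, abs_div, abs_pow, abs_of_pos (by positivity : (0:ℝ) < (n:ℝ)+1)]
      calc |z| ^ n / ((n:ℝ)+1) ≤ |z| ^ n := div_le_self (by positivity) h1
        _ ≤ r ^ n := pow_le_pow_left₀ (abs_nonneg z) hz' n)
    (y₀ := 0) (by constructor <;> [linarith [abs_nonneg y]; linarith [abs_nonneg y]])
    (by
      apply Summable.congr summable_zero
      intro n
      simp)
    (abs_lt.mp hyr |> fun h => ⟨h.1, h.2⟩)
  exact key

lemma tsum_deriv_eq {y : ℝ} (hy : |y| < 1) (hy0 : y ≠ 0) :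
    ∑' n : ℕ, y ^ n / ((n : ℝ) + 1) = -Real.log (1 - y) / y := by
  have h := (hasSum_pow_div_log_of_abs_lt_one hy).mul_left y⁻¹
  have h2 : HasSum (fun n : ℕ => y ^ n / ((n : ℝ) + 1)) (y⁻¹ * -Real.log (1 - y)) := by
    have e : (fun n : ℕ => y ^ n / ((n : ℝ) + 1)) =
        fun n : ℕ => y⁻¹ * (y ^ (n + 1) / ((n : ℝ) + 1)) := by
      funext n
      rw [pow_succ']
      field_simp
    rw [e]; exact h
  rw [h2.tsum_eq, div_eq_inv_mul]

lemma hasDerivAt_H {t : ℝ} (ht1 : -1 < t) (ht2 : t < 1) :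
    HasDerivAt (fun s => Li2 (1 / 2) - Li2 ((1 - s) / 2))
      ((Real.log 2 - Real.log (1 + t)) / (1 - t)) t := by
  have hy : |(1 - t) / 2| < 1 := by rw [abs_lt]; constructor <;> linarith
  have hy0 : (1 - t) / 2 ≠ 0 := ne_of_gt (by linarith)
  have hinner : HasDerivAt (fun s : ℝ => (1 - s) / 2) (-(1/2)) t := by
    have := ((hasDerivAt_id t).const_sub 1).div_const 2
    refine this.congr_deriv ?_; norm_num
  have hcomp := (li2_hasDerivAt hy).comp t hinner
  have h := (hasDerivAt_const t (Li2 (1/2))).sub hcomp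
  refine h.congr_deriv ?_
  rw [tsum_deriv_eq hy hy0]
  have h12 : (1:ℝ) - (1 - t)/2 = (1 + t)/2 := by ring
  rw [h12, Real.log_div (by linarith) two_ne_zero]
  have hne : (1:ℝ) - t ≠ 0 := by linarith
  have hne2 : (2:ℝ) - t * 2 ≠ 0 := by intro h; apply hne; linarith
  field_simp
  ring

lemma g_bound {t : ℝ} (h0 : 0 < t) (h1 : t ≤ 1) :
    ‖(Real.log 2 - Real.log (1 + t)) / (1 - t)‖ ≤ 1 := by
  rcases eq_or_lt_of_le h1 with rfl | ht1
  · simp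
  · have hpos : (0:ℝ) < 1 + t := by linarith
    have hnum0 : 0 ≤ Real.log 2 - Real.log (1 + t) := by
      have := Real.log_le_log (by linarith : (0:ℝ) < 1 + t) (by linarith : 1 + t ≤ 2)
      linarith
    have hg0 : 0 ≤ (Real.log 2 - Real.log (1 + t)) / (1 - t) :=
      div_nonneg hnum0 (by linarith)
    have hnum : Real.log 2 - Real.log (1 + t) ≤ (1 - t) / (1 + t) := by
      have h := Real.log_le_sub_one_of_pos (x := 2 / (1 + t)) (by positivity)
      rw [Real.log_div two_ne_zero (by linarith)] at h
      have he : 2 / (1 + t) - 1 = (1 - t) / (1 + t) := by field_simp; ring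
      linarith [he ▸ h]
    rw [Real.norm_eq_abs, abs_of_nonneg hg0]
    calc (Real.log 2 - Real.log (1 + t)) / (1 - t)
        ≤ ((1 - t) / (1 + t)) / (1 - t) :=
          (div_le_div_iff_of_pos_right (by linarith : (0:ℝ) < 1 - t)).mpr hnum
      _ = 1 / (1 + t) := by
          rw [div_right_comm, div_self (by linarith : (1:ℝ) - t ≠ 0)]
      _ ≤ 1 := by
          rw [div_le_one hpos]; linarith

lemma H_cont {t : ℝ} (ht1 : -1 < t) (ht2 : t < 3) :
    ContinuousAt (fun s => Li2 (1 / 2) - Li2 ((1 - s) / 2)) t := by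
  have hy : |(1 - t) / 2| < 1 := by rw [abs_lt]; constructor <;> linarith
  have hinner : HasDerivAt (fun s : ℝ => (1 - s) / 2) (-(1/2)) t := by
    have := ((hasDerivAt_id t).const_sub 1).div_const 2
    refine this.congr_deriv ?_; norm_num
  exact ((hasDerivAt_const t (Li2 (1/2))).sub
    ((li2_hasDerivAt hy).comp t hinner)).continuousAt

lemma integral_g (α : ℝ) (h0 : -1 < α) (h1 : α ≤ 1) :
    ∫ t in (0:ℝ)..α, (Real.log 2 - Real.log (1 + t)) / (1 - t) =
      Li2 (1 / 2) - Li2 ((1 - α) / 2) := by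
  set H : ℝ → ℝ := fun s => Li2 (1 / 2) - Li2 ((1 - s) / 2) with hH
  have hH0 : H 0 = 0 := by simp [hH]
  rcases le_or_gt 0 α with hα | hα
  · have key := intervalIntegral.integral_eq_sub_of_hasDeriv_right_of_le hα
      (f := H) (f' := fun t => (Real.log 2 - Real.log (1 + t)) / (1 - t))
      (fun t ht => (H_cont (by linarith [ht.1]) (by linarith [ht.2])).continuousWithinAt)
      (fun t ht => (hasDerivAt_H (by linarith [ht.1]) (by linarith [ht.2])).hasDerivWithinAt)
      ?_
    · rw [key, hH0, sub_zero]
    · rw [intervalIntegrable_iff_integrableOn_Ioc_of_le hα]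
      apply Measure.integrableOn_of_bounded (M := 1)
      · rw [Real.volume_Ioc]; exact ENNReal.ofReal_ne_top
      · apply Measurable.aestronglyMeasurable
        apply Measurable.div
        · exact (measurable_const.sub ((measurable_id.const_add 1).log))
        · exact measurable_const.sub measurable_id
      · rw [ae_restrict_iff' measurableSet_Ioc]
        filter_upwards with t ht
        exact g_bound ht.1 (le_trans ht.2 h1)
  · rw [intervalIntegral.integral_symm]
    have key := intervalIntegral.integral_eq_sub_of_hasDeriv_right_of_le hα.le
      (f := H) (f' := fun t => (Real.log 2 - Real.log (1 + t)) / (1 - t))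
      (fun t ht => (H_cont (by linarith [ht.1]) (by linarith [ht.2])).continuousWithinAt)
      (fun t ht => (hasDerivAt_H (by linarith [ht.1]) (by linarith [ht.2])).hasDerivWithinAt)
      ?_
    · rw [key, hH0]; ring
    · apply ContinuousOn.intervalIntegrable
      apply ContinuousOn.div
      · apply continuousOn_const.sub
        apply Real.continuousOn_log.comp (continuousOn_const.add continuousOn_id)
        intro t ht
        rw [Set.uIcc_of_le hα.le] at ht
        have h' := ht.1
        simp only [Set.mem_compl_iff, Set.mem_singleton_iff]
        intro h; simp only [Pi.add_apply, id] at h; linarith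
      · exact continuousOn_const.sub continuousOn_id
      · intro t ht
        rw [Set.uIcc_of_le hα.le] at ht
        have h' := ht.2
        intro h
        have : t = 1 := by linarith
        linarith

/-- Inner integral over x. -/
lemma inner_x_integral {t : ℝ} (ht1 : -1 < t) (ht2 : t < 1) :
    ∫ x in (0:ℝ)..1, 1 / ((1 + x) * (1 + t * x)) =
      (Real.log 2 - Real.log (1 + t)) / (1 - t) := by
  have hpos : ∀ x ∈ Set.uIcc (0:ℝ) 1, 0 < 1 + t * x ∧ 0 < 1 + x := by
    intro x hx
    rw [Set.uIcc_of_le zero_le_one] at hx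
    obtain ⟨hx0, hx1⟩ := hx
    constructor
    · rcases le_or_gt 0 t with h | h
      · nlinarith
      · nlinarith
    · linarith
  have hderiv : ∀ x ∈ Set.uIcc (0:ℝ) 1,
      HasDerivAt (fun x => (Real.log (1 + x) - Real.log (1 + t * x)) / (1 - t))
        (1 / ((1 + x) * (1 + t * x))) x := by
    intro x hx
    obtain ⟨h1, h2⟩ := hpos x hx
    have d1 : HasDerivAt (fun x : ℝ => Real.log (1 + x)) (1 / (1 + x)) x := by
      have := ((hasDerivAt_id x).const_add 1).log (by linarith : 1 + x ≠ 0)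
      simpa using this
    have d2 : HasDerivAt (fun x : ℝ => Real.log (1 + t * x)) (t / (1 + t * x)) x := by
      have := (((hasDerivAt_id x).const_mul t).const_add 1).log (by linarith : 1 + t * x ≠ 0)
      simpa [mul_comm] using this
    have := (d1.sub d2).div_const (1 - t)
    refine this.congr_deriv ?_
    have hne : (1:ℝ) - t ≠ 0 := by linarith
    have hne1 : (1:ℝ) + t * x ≠ 0 := by linarith
    have hne2 : (1:ℝ) + x ≠ 0 := by linarith
    rw [div_eq_iff hne, div_sub_div _ _ hne2 hne1, div_mul_eq_mul_div,
      div_eq_div_iff (mul_ne_zero hne2 hne1) (mul_ne_zero hne2 hne1)]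
    ring
  rw [intervalIntegral.integral_eq_sub_of_hasDerivAt hderiv ?_]
  · simp only [mul_one, mul_zero, add_zero]
    rw [Real.log_one]
    ring_nf
  · apply ContinuousOn.intervalIntegrable
    apply ContinuousOn.div continuousOn_const
    · apply ContinuousOn.mul
      · exact continuousOn_const.add continuousOn_id
      · exact continuousOn_const.add (continuousOn_const.mul continuousOn_id)
    · intro x hx
      obtain ⟨h1, h2⟩ := hpos x hx
      positivity

/-- Inner integral over t representing the logarithm. -/
lemma inner_t_integral {α x : ℝ} (h0 : -1 < α) (h1 : α ≤ 1)
    (hx0 : 0 < x) (hx1 : x ≤ 1) :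
    Real.log (1 + α * x) / (x * (1 + x)) =
      ∫ t in (0:ℝ)..α, 1 / ((1 + x) * (1 + t * x)) := by
  have hpos : ∀ t ∈ Set.uIcc (0:ℝ) α, 0 < 1 + t * x := by
    intro t ht
    rcases Set.mem_uIcc.mp ht with ⟨h1', h2'⟩ | ⟨h1', h2'⟩
    · nlinarith
    · nlinarith
  have hderiv : ∀ t ∈ Set.uIcc (0:ℝ) α,
      HasDerivAt (fun t => Real.log (1 + t * x) / (x * (1 + x)))
        (1 / ((1 + x) * (1 + t * x))) t := by
    intro t ht
    have h2 := hpos t ht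
    have d2 : HasDerivAt (fun t : ℝ => Real.log (1 + t * x)) (x / (1 + t * x)) t := by
      have := (((hasDerivAt_id t).mul_const x).const_add 1).log (by linarith : 1 + t * x ≠ 0)
      simpa using this
    have := d2.div_const (x * (1 + x))
    refine this.congr_deriv ?_
    have hx : x ≠ 0 := ne_of_gt hx0
    have h3 : (0:ℝ) < 1 + x := by linarith
    field_simp
  rw [intervalIntegral.integral_eq_sub_of_hasDerivAt hderiv ?_]
  · simp [mul_comm]
  · apply ContinuousOn.intervalIntegrable
    apply ContinuousOn.div continuousOn_const
    · apply ContinuousOn.mul continuousOn_const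
      · exact continuousOn_const.add (continuousOn_id.mul continuousOn_const)
    · intro t ht
      have h2 := hpos t ht
      have h3 : (0:ℝ) < 1 + x := by linarith
      positivity

lemma fubini_swap {a b : ℝ} (ha : -1 < a) (hb : b ≤ 1) (hab : a ≤ b) :
    ∫ x in Set.Ioc (0:ℝ) 1, ∫ t in Set.Ioc a b, 1 / ((1 + x) * (1 + t * x)) =
      ∫ t in Set.Ioc a b, ∫ x in Set.Ioc (0:ℝ) 1, 1 / ((1 + x) * (1 + t * x)) := by
  apply MeasureTheory.integral_integral_swap
  rw [Measure.prod_restrict]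
  have hsub : Set.Ioc (0:ℝ) 1 ×ˢ Set.Ioc a b ⊆ Set.Icc (0:ℝ) 1 ×ˢ Set.Icc a b :=
    Set.prod_mono Set.Ioc_subset_Icc_self Set.Ioc_subset_Icc_self
  have hcont : ContinuousOn (Function.uncurry fun x t => 1 / ((1 + x) * (1 + t * x)))
      (Set.Icc (0:ℝ) 1 ×ˢ Set.Icc a b) := by
    apply ContinuousOn.div continuousOn_const
    · fun_prop
    · rintro ⟨x, t⟩ ⟨⟨hx0, hx1⟩, ⟨ht0, ht1⟩⟩
      have h1 : (0:ℝ) < 1 + x := by linarith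
      have h2 : (0:ℝ) < 1 + t * x := by
        rcases le_or_gt 0 t with h | h
        · nlinarith
        · nlinarith
      simp only [Function.uncurry]
      positivity
  exact (hcont.integrableOn_compact (isCompact_Icc.prod isCompact_Icc)).mono_set hsub

theorem stmt10 (α : ℝ) (h0 : -1 < α) (h1 : α ≤ 1) :
    ∫ x in (0:ℝ)..1, Real.log (1 + α * x) / (x * (1 + x)) =
      Li2 (1 / 2) - Li2 ((1 - α) / 2) := by
  have hae : ∀ᵐ (t : ℝ), t ≠ 1 := by
    rw [ae_iff]
    simp only [not_not, Set.setOf_eq_eq_singleton]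
    exact Real.volume_singleton
  rw [intervalIntegral.integral_of_le zero_le_one]
  rcases le_or_gt 0 α with hα | hα
  · calc ∫ x in Set.Ioc (0:ℝ) 1, Real.log (1 + α * x) / (x * (1 + x))
        = ∫ x in Set.Ioc (0:ℝ) 1, ∫ t in Set.Ioc 0 α, 1 / ((1 + x) * (1 + t * x)) := by
          apply setIntegral_congr_fun measurableSet_Ioc
          intro x hx
          dsimp only
          rw [inner_t_integral h0 h1 hx.1 hx.2, intervalIntegral.integral_of_le hα]
      _ = ∫ t in Set.Ioc (0:ℝ) α, ∫ x in Set.Ioc (0:ℝ) 1, 1 / ((1 + x) * (1 + t * x)) :=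
          fubini_swap (by linarith) h1 hα
      _ = ∫ t in Set.Ioc (0:ℝ) α, (Real.log 2 - Real.log (1 + t)) / (1 - t) := by
          apply setIntegral_congr_ae measurableSet_Ioc
          filter_upwards [hae] with t ht1 ht
          rw [← intervalIntegral.integral_of_le zero_le_one]
          exact inner_x_integral (by linarith [ht.1]) (lt_of_le_of_ne (le_trans ht.2 h1) ht1)
      _ = ∫ t in (0:ℝ)..α, (Real.log 2 - Real.log (1 + t)) / (1 - t) :=
          (intervalIntegral.integral_of_le hα).symm
      _ = Li2 (1 / 2) - Li2 ((1 - α) / 2) := integral_g α h0 h1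
  · calc ∫ x in Set.Ioc (0:ℝ) 1, Real.log (1 + α * x) / (x * (1 + x))
        = ∫ x in Set.Ioc (0:ℝ) 1, -∫ t in Set.Ioc α 0, 1 / ((1 + x) * (1 + t * x)) := by
          apply setIntegral_congr_fun measurableSet_Ioc
          intro x hx
          dsimp only
          rw [inner_t_integral h0 h1 hx.1 hx.2, intervalIntegral.integral_symm,
            intervalIntegral.integral_of_le hα.le]
      _ = -∫ x in Set.Ioc (0:ℝ) 1, ∫ t in Set.Ioc α 0, 1 / ((1 + x) * (1 + t * x)) :=
          integral_neg _
      _ = -∫ t in Set.Ioc α 0, ∫ x in Set.Ioc (0:ℝ) 1, 1 / ((1 + x) * (1 + t * x)) := by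
          rw [fubini_swap h0 (by linarith) hα.le]
      _ = -∫ t in Set.Ioc α 0, (Real.log 2 - Real.log (1 + t)) / (1 - t) := by
          congr 1
          apply setIntegral_congr_fun measurableSet_Ioc
          intro t ht
          dsimp only
          rw [← intervalIntegral.integral_of_le zero_le_one]
          exact inner_x_integral (by linarith [ht.1]) (by linarith [ht.2])
      _ = ∫ t in (0:ℝ)..α, (Real.log 2 - Real.log (1 + t)) / (1 - t) := by
          rw [intervalIntegral.integral_symm, intervalIntegral.integral_of_le hα.le]
      _ = Li2 (1 / 2) - Li2 ((1 - α) / 2) := integral_g α h0 h1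
end

section
/- For every real α with -1 < α ≤ 1, Li₂(1/2) - Li₂((1-α)/2) = ∑_{n=0}^∞ (log 2 - Hₙ⁻) α^{n+1}/(n+1), where Hₙ⁻ = ∑_{k=1}^n (-1)^{k-1}/k. -/
open Real

lemma hasSum_choose_pow (k : ℕ) :
    HasSum (fun n : ℕ => (n.choose k : ℝ) * (1/2) ^ (n+1)) 1 := by
  have h : HasSum (fun n : ℕ => ((n+k).choose k : ℝ) * (1/2:ℝ) ^ n) (1 / (1 - 1/2) ^ (k+1)) :=
    hasSum_choose_mul_geometric_of_norm_lt_one k (by norm_num)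
  have h3 : HasSum (fun n : ℕ => ((n+k).choose k : ℝ) * (1/2) ^ (n+k+1)) 1 := by
    have h2 := h.mul_left ((1/2:ℝ)^(k+1))
    have e1 : ((1/2:ℝ)^(k+1)) * (1 / (1 - 1/2) ^ (k+1)) = 1 := by
      have : (1:ℝ) - 1/2 = 1/2 := by norm_num
      rw [this, mul_one_div, div_self (by positivity)]
    rw [e1] at h2
    convert h2 using 2 with n
    rfl
    ring
  have hz : ∑ i ∈ Finset.range k, ((i.choose k : ℝ) * (1/2) ^ (i+1)) = 0 := by
    apply Finset.sum_eq_zero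
    intro i hi
    rw [Nat.choose_eq_zero_of_lt (Finset.mem_range.mp hi)]
    simp
  refine (hasSum_nat_add_iff' (f := fun n : ℕ => (n.choose k : ℝ) * (1/2) ^ (n+1)) k).mp ?_
  rw [hz, sub_zero]
  convert h3 using 2 with n

lemma choose_cast_id (n k : ℕ) :
    ((n:ℝ)+1) * (n.choose k : ℝ) = (((n+1).choose (k+1) : ℕ) : ℝ) * ((k:ℝ)+1) := by
  have h2 : (n+1) * n.choose k = (n+1).choose (k+1) * (k+1) := Nat.add_one_mul_choose_eq n k
  exact_mod_cast congrArg (Nat.cast (R := ℝ)) h2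

lemma step_id (n k : ℕ) :
    ((n.choose k : ℝ) + n.choose (k+1)) / ((n:ℝ)+1) = (n.choose k : ℝ) / ((k:ℝ)+1) := by
  have h1 : n.choose k + n.choose (k+1) = (n+1).choose (k+1) := (Nat.choose_succ_succ _ _).symm
  have hc := choose_cast_id n k
  rw [div_eq_div_iff (by positivity) (by positivity)]
  rw [show ((n.choose k : ℝ) + n.choose (k+1)) = (((n.choose k + n.choose (k+1) : ℕ)):ℝ) by
    push_cast; ring, h1]
  linarith [hc]

lemma choose_div_sq (n k : ℕ) :
    (((n+1).choose (k+1) : ℕ) : ℝ) / ((n:ℝ)+1)^2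
      = (n.choose k : ℝ) / (((n:ℝ)+1) * ((k:ℝ)+1)) := by
  have hc := choose_cast_id n k
  rw [div_eq_div_iff (by positivity) (by positivity)]
  nlinarith [hc]

lemma hasSum_u (k : ℕ) :
    HasSum (fun n : ℕ => (n.choose k : ℝ) * (1/2) ^ (n+1) / ((n:ℝ)+1))
      ((-1)^k * (Real.log 2 - skewH k)) := by
  induction k with
  | zero =>
    have h := Real.hasSum_pow_div_log_of_abs_lt_one (x := (1/2:ℝ))
      (by rw [abs_of_pos]; norm_num; norm_num)
    have : -Real.log (1 - 1/2) = Real.log 2 := by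
      rw [show (1:ℝ) - 1/2 = 2⁻¹ by norm_num, Real.log_inv, neg_neg]
    rw [this] at h
    simpa [skewH] using h
  | succ k ih =>
    set f := fun n : ℕ => (n.choose (k+1) : ℝ) * (1/2) ^ (n+1) / ((n:ℝ)+1) with hf
    have hfs : Summable f := by
      apply Summable.of_nonneg_of_le (fun n => by positivity)
        (fun n => ?_) (hasSum_choose_pow (k+1)).summable
      rw [hf]
      simp only
      rw [div_le_iff₀ (by positivity)]
      nlinarith [mul_nonneg (mul_nonneg (Nat.cast_nonneg (n.choose (k+1)) : (0:ℝ) ≤ _)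
        (pow_nonneg (by norm_num : (0:ℝ) ≤ 1/2) (n+1))) (Nat.cast_nonneg n : (0:ℝ) ≤ n)]
    have hg : HasSum (fun n : ℕ =>
        (n.choose k : ℝ) * (1/2) ^ (n+1) / ((n:ℝ)+1) + f n) (1/((k:ℝ)+1)) := by
      have h0 := (hasSum_choose_pow k).div_const ((k:ℝ)+1)
      convert h0 using 2 with n
      rfl
      have h := step_id n k
      rw [hf]
      simp only
      linear_combination ((1/2:ℝ)^(n+1)) * h
    have h2 := ih.add hfs.hasSum
    have hval : ∑' n, f n = 1/((k:ℝ)+1) - (-1)^k * (Real.log 2 - skewH k) := by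
      have := hg.unique h2; linarith
    have hsk : skewH (k+1) = skewH k + (-1)^k / ((k:ℝ)+1) := Finset.sum_range_succ _ _
    have hsq : ((-1:ℝ))^k * ((-1:ℝ))^k = 1 := by
      rw [← pow_add]; exact Even.neg_one_pow ⟨k, rfl⟩
    have : ((-1:ℝ))^(k+1) * (Real.log 2 - skewH (k+1))
        = 1/((k:ℝ)+1) - (-1)^k * (Real.log 2 - skewH k) := by
      rw [hsk, pow_succ]
      linear_combination (1/((k:ℝ)+1)) * hsq
    rw [this, ← hval]
    exact hfs.hasSum

lemma choose_row_bound (n : ℕ) :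
    ∑ k ∈ Finset.range (n+1), (((n+1).choose (k+1) : ℕ) : ℝ) ≤ 2^(n+1) := by
  have h1 : ∑ i ∈ Finset.range (n+2), (n+1).choose i = 2^(n+1) := Nat.sum_range_choose (n+1)
  have h2 : ∑ i ∈ Finset.range (n+2), (n+1).choose i
      = ∑ k ∈ Finset.range (n+1), (n+1).choose (k+1) + (n+1).choose 0 :=
    Finset.sum_range_succ' _ _
  have : ∑ k ∈ Finset.range (n+1), (n+1).choose (k+1) ≤ 2^(n+1) := by omega
  calc ∑ k ∈ Finset.range (n+1), (((n+1).choose (k+1) : ℕ) : ℝ)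
      = ((∑ k ∈ Finset.range (n+1), (n+1).choose (k+1) : ℕ) : ℝ) := by push_cast; ring
    _ ≤ ((2^(n+1) : ℕ) : ℝ) := by exact_mod_cast this
    _ = 2^(n+1) := by push_cast; ring

theorem stmt12 (α : ℝ) (h0 : -1 < α) (h1 : α ≤ 1) :
    Li2 (1 / 2) - Li2 ((1 - α) / 2) =
      ∑' n : ℕ, (Real.log 2 - skewH n) * α ^ (n + 1) / ((n : ℝ) + 1) := by
  have hα : |α| ≤ 1 := abs_le.mpr ⟨le_of_lt h0, h1⟩
  set F : ℕ × ℕ → ℝ := fun p =>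
    (((p.1+1).choose (p.2+1) : ℕ) : ℝ) * (1/2)^(p.1+1) / ((p.1:ℝ)+1)^2
      * ((-1)^p.2 * α^(p.2+1)) with hFdef
  set G : ℕ × ℕ → ℝ := fun p =>
    (((p.1+1).choose (p.2+1) : ℕ) : ℝ) * (1/2)^(p.1+1) / ((p.1:ℝ)+1)^2 with hGdef
  -- row vanishing
  have hvanish : ∀ n k, n + 1 ≤ k → (((n+1).choose (k+1) : ℕ) : ℝ) = 0 := by
    intro n k hk
    rw [Nat.choose_eq_zero_of_lt (by omega)]
    simp
  have hGrow : ∀ n, ∀ k ∉ Finset.range (n+1), G (n, k) = 0 := by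
    intro n k hk
    simp only [hGdef]
    rw [hvanish n k (by simpa using hk)]
    simp
  have hFrow : ∀ n, ∀ k ∉ Finset.range (n+1), F (n, k) = 0 := by
    intro n k hk
    simp only [hFdef]
    rw [hvanish n k (by simpa using hk)]
    simp
  have hGnonneg : ∀ p, 0 ≤ G p := fun p => by simp only [hGdef]; positivity
  have habsF : ∀ p, |F p| ≤ G p := by
    rintro ⟨n, k⟩
    have e4 : |(-1:ℝ)^k * α^(k+1)| ≤ 1 := by
      rw [abs_mul, abs_pow, abs_pow, abs_neg, abs_one, one_pow, one_mul]
      exact pow_le_one₀ (abs_nonneg _) hα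
    have heq : |F (n, k)| = G (n, k) * |(-1:ℝ)^k * α^(k+1)| := by
      simp only [hFdef, hGdef]
      rw [abs_mul]
      congr 1
      exact abs_of_nonneg (by positivity)
    rw [heq]
    calc G (n, k) * |(-1:ℝ)^k * α^(k+1)| ≤ G (n, k) * 1 :=
          mul_le_mul_of_nonneg_left e4 (hGnonneg _)
      _ = G (n, k) := mul_one _
  -- summability of G
  have hGrowSummable : ∀ n, Summable (fun k => G (n, k)) := fun n =>
    summable_of_ne_finset_zero (hGrow n)
  have hGrowSum : ∀ n, ∑' k, G (n, k) ≤ 1/((n:ℝ)+1)^2 := by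
    intro n
    rw [tsum_eq_sum (hGrow n)]
    have : ∑ k ∈ Finset.range (n+1), G (n, k)
        = (∑ k ∈ Finset.range (n+1), (((n+1).choose (k+1) : ℕ) : ℝ)) * (1/2)^(n+1) / ((n:ℝ)+1)^2 := by
      rw [Finset.sum_mul, Finset.sum_div]
    rw [this]
    rw [div_le_div_iff₀ (by positivity) (by positivity)]
    have hb := choose_row_bound n
    have h14 : (∑ k ∈ Finset.range (n+1), (((n+1).choose (k+1) : ℕ) : ℝ)) * (1/2)^(n+1) ≤ 1 := by
      calc (∑ k ∈ Finset.range (n+1), (((n+1).choose (k+1) : ℕ) : ℝ)) * (1/2)^(n+1)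
          ≤ 2^(n+1) * (1/2)^(n+1) :=
            mul_le_mul_of_nonneg_right hb (by positivity)
        _ = 1 := by rw [← mul_pow]; norm_num
    nlinarith [sq_nonneg ((n:ℝ)+1), h14]
  have hsum_inv_sq : Summable (fun n : ℕ => 1/((n:ℝ)+1)^2) := by
    have := (summable_nat_add_iff (f := fun n : ℕ => 1/(n:ℝ)^2) 1).mpr
      (summable_one_div_nat_pow.mpr one_lt_two)
    convert this using 2 with n
    rfl
    push_cast
    ring_nf
  have hG : Summable G := by
    apply (summable_prod_of_nonneg hGnonneg).mpr
    refine ⟨hGrowSummable, ?_⟩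
    apply Summable.of_nonneg_of_le (fun n => tsum_nonneg (fun k => hGnonneg (n, k)))
      (fun n => hGrowSum n) hsum_inv_sq
  have hF : Summable F := by
    rw [← summable_abs_iff]
    exact Summable.of_nonneg_of_le (fun p => abs_nonneg _) habsF hG
  -- row sums (binomial theorem)
  have hrow : ∀ n : ℕ, ∑' k, F (n, k)
      = (1/2)^(n+1) / ((n:ℝ)+1)^2 - ((1-α)/2)^(n+1) / ((n:ℝ)+1)^2 := by
    intro n
    rw [tsum_eq_sum (hFrow n)]
    have hbin : (1-α)^(n+1) = ∑ i ∈ Finset.range (n+2), (-α)^i * (n+1).choose i := by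
      have := add_pow (-α) 1 (n+1)
      simp only [one_pow, mul_one] at this
      rw [show (1:ℝ) - α = -α + 1 by ring, this]
    have hsplit : ∑ i ∈ Finset.range (n+2), (-α)^i * ((n+1).choose i : ℝ)
        = (∑ k ∈ Finset.range (n+1), (-α)^(k+1) * ((n+1).choose (k+1) : ℝ)) + 1 := by
      rw [Finset.sum_range_succ' (fun i => (-α)^i * ((n+1).choose i : ℝ)) (n+1)]
      simp
    have key : ∑ k ∈ Finset.range (n+1), (((n+1).choose (k+1) : ℕ) : ℝ) * ((-1)^k * α^(k+1))
        = 1 - (1-α)^(n+1) := by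
      rw [hbin, hsplit]
      have : ∀ k, (-α)^(k+1) * ((n+1).choose (k+1) : ℝ)
          = -((((n+1).choose (k+1) : ℕ) : ℝ) * ((-1)^k * α^(k+1))) := by
        intro k
        rw [show (-α)^(k+1) = (-1)^(k+1) * α^(k+1) by rw [← neg_one_mul, mul_pow], pow_succ]
        push_cast
        ring
      rw [Finset.sum_congr rfl (fun k _ => this k), Finset.sum_neg_distrib]
      ring
    have expand : ∑ k ∈ Finset.range (n+1), F (n, k)
        = (1/2)^(n+1) / ((n:ℝ)+1)^2
          * ∑ k ∈ Finset.range (n+1), (((n+1).choose (k+1) : ℕ) : ℝ) * ((-1)^k * α^(k+1)) := by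
      rw [Finset.mul_sum]
      apply Finset.sum_congr rfl
      intro k _
      simp only [hFdef]
      ring
    rw [expand, key]
    have : ((1-α)/2)^(n+1) = (1-α)^(n+1) * (1/2)^(n+1) := by
      rw [← mul_pow]; ring_nf
    rw [this]
    ring
  -- column sums
  have hcol : ∀ k : ℕ, HasSum (fun n => F (n, k))
      ((Real.log 2 - skewH k) * α^(k+1) / ((k:ℝ)+1)) := by
    intro k
    have h := (hasSum_u k).mul_right ((-1)^k * α^(k+1) / ((k:ℝ)+1))
    have hsq : ((-1:ℝ))^k * ((-1:ℝ))^k = 1 := by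
      rw [← pow_add]; exact Even.neg_one_pow ⟨k, rfl⟩
    have hval : (-1:ℝ)^k * (Real.log 2 - skewH k) * ((-1)^k * α^(k+1) / ((k:ℝ)+1))
        = (Real.log 2 - skewH k) * α^(k+1) / ((k:ℝ)+1) := by
      field_simp
      linear_combination (Real.log 2 * α^(k+1) - skewH k * α^(k+1)) * hsq
    rw [hval] at h
    convert h using 2 with n
    rfl
    simp only [hFdef]
    rw [show (((n+1).choose (k+1) : ℕ) : ℝ) * (1/2)^(n+1) / ((n:ℝ)+1)^2
        = ((((n+1).choose (k+1) : ℕ) : ℝ) / ((n:ℝ)+1)^2) * (1/2)^(n+1) by ring,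
      choose_div_sq n k, div_mul_eq_div_div]
    ring
  -- Li2 sides summable
  have hsummand : ∀ x : ℝ, |x| ≤ 1 → Summable (fun n : ℕ => x^(n+1)/((n:ℝ)+1)^2) := by
    intro x hx
    apply Summable.of_norm
    apply Summable.of_nonneg_of_le (fun n => norm_nonneg _) (fun n => ?_) hsum_inv_sq
    rw [norm_div, norm_pow]
    have h1 : ‖x‖^(n+1) ≤ 1 := pow_le_one₀ (norm_nonneg _) hx
    have h2 : ‖((n:ℝ)+1)^2‖ = ((n:ℝ)+1)^2 := by
      rw [Real.norm_eq_abs, abs_of_nonneg (by positivity)]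
    rw [h2, div_le_div_iff₀ (by positivity) (by positivity)]
    nlinarith [sq_nonneg ((n:ℝ)+1)]
  have hs1 : Summable (fun n : ℕ => (1/2:ℝ)^(n+1)/((n:ℝ)+1)^2) :=
    hsummand (1/2) (by rw [abs_of_pos] <;> norm_num)
  have hs2 : Summable (fun n : ℕ => ((1-α)/2:ℝ)^(n+1)/((n:ℝ)+1)^2) := by
    apply hsummand
    rw [abs_div, abs_of_pos (by norm_num : (0:ℝ) < 2)]
    rw [div_le_one (by norm_num)]
    rw [abs_le]
    constructor <;> linarith
  -- final chain
  have lhs_eq : Li2 (1/2) - Li2 ((1-α)/2) = ∑' n : ℕ, ∑' k : ℕ, F (n, k) := by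
    rw [Li2, Li2, ← Summable.tsum_sub hs1 hs2]
    apply tsum_congr
    intro n
    rw [hrow n]
  rw [lhs_eq]
  have swap : ∑' n : ℕ, ∑' k : ℕ, F (n, k) = ∑' k : ℕ, ∑' n : ℕ, F (n, k) := by
    have hunc : Summable (Function.uncurry (fun n k => F (n, k))) := hF
    exact (Summable.tsum_comm hunc).symm
  rw [swap]
  apply tsum_congr
  intro k
  rw [(hcol k).tsum_eq]
end

section
/- ∑_{n=0}^∞ (log 2 - Hₙ⁻)/(n+1) = π²/12 - (log 2)²/2, where Hₙ⁻ = ∑_{k=1}^n (-1)^{k-1}/k. -/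
open Real MeasureTheory Set intervalIntegral

namespace Stmt13Aux

lemma hasSum_g : HasSum (fun n : ℕ => 1 / ((n : ℝ) + 1) ^ 2) (π ^ 2 / 6) := by
  have h := hasSum_zeta_two
  rw [← hasSum_nat_add_iff' 1] at h
  simpa using h

lemma hasSum_eta2 : HasSum (fun n : ℕ => (-1) ^ n / ((n : ℝ) + 1) ^ 2) (π ^ 2 / 12) := by
  set g : ℕ → ℝ := fun n => 1 / ((n : ℝ) + 1) ^ 2 with hgdef
  have hg : HasSum g (π ^ 2 / 6) := hasSum_g
  have hodd : HasSum (fun k : ℕ => g (2 * k + 1)) (π ^ 2 / 24) := by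
    have h1 := hg.mul_left (1/4)
    have heq : (fun n : ℕ => 1/4 * g n) = fun k : ℕ => g (2 * k + 1) := by
      funext k; simp only [hgdef]; push_cast; field_simp; ring
    rw [heq] at h1
    convert (show HasSum (fun k => g (2 * k + 1)) (1 / 4 * (π ^ 2 / 6)) from h1) using 1
    ring
  have hinj : Function.Injective (fun k : ℕ => 2 * k) := fun a b h => by
    simp only at h; omega
  have hsumev : Summable (fun k : ℕ => g (2 * k)) :=
    hg.summable.comp_injective hinj
  have hE0 := hsumev.hasSum
  have htot := HasSum.even_add_odd hE0 hodd
  have hEv : (∑' k : ℕ, g (2 * k)) = π ^ 2 / 8 := by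
    have := htot.unique hg
    linarith
  rw [hEv] at hE0
  have h1 : HasSum (fun k : ℕ => (-1) ^ (2 * k) * g (2 * k)) (π ^ 2 / 8) := by
    convert hE0 using 2 with k
    simp [pow_mul]
  have h2 : HasSum (fun k : ℕ => (-1) ^ (2 * k + 1) * g (2 * k + 1)) (-(π ^ 2 / 24)) := by
    convert (show HasSum (fun k => -g (2 * k + 1)) (-(π ^ 2 / 24)) from hodd.neg) using 2 with k
    simp [pow_succ, pow_mul]
  have h3 := HasSum.even_add_odd (f := fun n => (-1) ^ n * g n) h1 h2
  have h4 : π ^ 2 / 8 + -(π ^ 2 / 24) = π ^ 2 / 12 := by ring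
  rw [h4] at h3
  refine h3.congr_fun fun n => ?_
  simp [hgdef, div_eq_mul_inv]

noncomputable def II (n : ℕ) : ℝ := ∫ t in (0:ℝ)..1, t ^ n / (1 + t)

lemma contOn (n : ℕ) : ContinuousOn (fun t : ℝ => t ^ n / (1 + t)) (Icc 0 1) := by
  apply ContinuousOn.div (continuousOn_pow n) (by fun_prop)
  intro t ht
  have := ht.1
  intro h; linarith

lemma intOn (n : ℕ) : IntegrableOn (fun t : ℝ => t ^ n / (1 + t)) (Ioo 0 1) :=
  ((contOn n).integrableOn_Icc).mono_set Ioo_subset_Icc_self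

lemma Ioo_int_eq (f : ℝ → ℝ) : ∫ t in Ioo (0:ℝ) 1, f t = ∫ t in (0:ℝ)..1, f t := by
  rw [intervalIntegral.integral_of_le zero_le_one, integral_Ioc_eq_integral_Ioo]

lemma integral_one_div_one_add : ∫ t in (0:ℝ)..1, 1 / (1 + t) = Real.log 2 := by
  have h : ∀ t ∈ Set.uIcc (0:ℝ) 1, HasDerivAt (fun t : ℝ => Real.log (1 + t)) (1 / (1 + t)) t := by
    intro t ht
    rw [Set.uIcc_of_le (by norm_num : (0:ℝ) ≤ 1)] at ht
    have h1 : (0:ℝ) < 1 + t := by linarith [ht.1]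
    have := ((hasDerivAt_id t).const_add 1).log h1.ne'
    simpa using this
  have hint : IntervalIntegrable (fun t : ℝ => 1 / (1 + t)) volume 0 1 := by
    apply ContinuousOn.intervalIntegrable
    rw [Set.uIcc_of_le (by norm_num : (0:ℝ) ≤ 1)]
    simpa using contOn 0
  have := intervalIntegral.integral_eq_sub_of_hasDerivAt h hint
  rw [this]; norm_num

lemma II_add (n : ℕ) : II n + II (n + 1) = 1 / ((n : ℝ) + 1) := by
  have hi : ∀ m : ℕ, IntervalIntegrable (fun t : ℝ => t ^ m / (1 + t)) volume 0 1 := by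
    intro m
    apply ContinuousOn.intervalIntegrable
    rw [Set.uIcc_of_le (by norm_num : (0:ℝ) ≤ 1)]
    exact contOn m
  have h1 : II n + II (n+1) = ∫ t in (0:ℝ)..1, (t ^ n / (1 + t) + t ^ (n+1) / (1 + t)) := by
    rw [intervalIntegral.integral_add (hi n) (hi (n+1))]; rfl
  rw [h1]
  have h2 : ∀ t ∈ Set.uIcc (0:ℝ) 1,
      t ^ n / (1 + t) + t ^ (n+1) / (1 + t) = t ^ n := by
    intro t ht
    rw [Set.uIcc_of_le (by norm_num : (0:ℝ) ≤ 1)] at ht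
    have h1 : (0:ℝ) < 1 + t := by linarith [ht.1]
    field_simp
    ring
  rw [intervalIntegral.integral_congr h2, integral_pow]
  norm_num

lemma key (n : ℕ) : Real.log 2 - skewH n = (-1) ^ n * II n := by
  induction n with
  | zero =>
    have : II 0 = Real.log 2 := by
      rw [II]; simp only [pow_zero]; exact integral_one_div_one_add
    simp [skewH, this]
  | succ n ih =>
    have hstep : skewH (n+1) = skewH n + (-1)^n / ((n:ℝ)+1) := by
      simp [skewH, Finset.sum_range_succ]
    have h := II_add n
    rw [hstep, pow_succ]
    linear_combination ih + (-1:ℝ)^n * h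

/-- the summand functions -/
noncomputable def F (n : ℕ) (t : ℝ) : ℝ := (1/(1+t)) * (((-1)^n / ((n:ℝ)+1)) * t^n)
noncomputable def G (n : ℕ) (t : ℝ) : ℝ := ((-1)^n / ((n:ℝ)+1)) * t^n

lemma polyIntOn (n : ℕ) : IntegrableOn (fun t : ℝ => t ^ n / ((n:ℝ)+1)) (Ioo 0 1) := by
  apply (Continuous.integrableOn_Icc ?_).mono_set (Ioo_subset_Icc_self (a := (0:ℝ)) (b := 1))
  exact (continuous_pow n).div_const _

lemma polyInt_val (n : ℕ) : ∫ t in Ioo (0:ℝ) 1, t ^ n / ((n:ℝ)+1) = 1/((n:ℝ)+1)^2 := by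
  rw [Ioo_int_eq, intervalIntegral.integral_div, integral_pow]
  push_cast
  rw [one_pow, zero_pow (by positivity)]
  field_simp
  ring

lemma norm_int_bound (n : ℕ) (f : ℝ → ℝ) (hf : IntegrableOn f (Ioo 0 1))
    (hb : ∀ t ∈ Ioo (0:ℝ) 1, ‖f t‖ ≤ t ^ n / ((n:ℝ)+1)) :
    ∫ t in Ioo (0:ℝ) 1, ‖f t‖ ≤ 1/((n:ℝ)+1)^2 := by
  rw [← polyInt_val n]
  exact setIntegral_mono_on hf.norm (polyIntOn n) measurableSet_Ioo hb

lemma G_bound (n : ℕ) : ∀ t ∈ Ioo (0:ℝ) 1, ‖G n t‖ ≤ t ^ n / ((n:ℝ)+1) := by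
  intro t ht
  have h0 : (0:ℝ) < t := ht.1
  rw [G, norm_mul, norm_div, norm_pow, norm_pow]
  simp only [norm_neg, norm_one, one_pow]
  rw [Real.norm_of_nonneg (by positivity : (0:ℝ) ≤ (n:ℝ)+1),
    Real.norm_of_nonneg h0.le]
  rw [div_mul_eq_mul_div, one_mul]

lemma F_bound (n : ℕ) : ∀ t ∈ Ioo (0:ℝ) 1, ‖F n t‖ ≤ t ^ n / ((n:ℝ)+1) := by
  intro t ht
  have h0 : (0:ℝ) < t := ht.1
  have h1 : (1:ℝ) ≤ 1 + t := by linarith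
  have := G_bound n t ht
  rw [F, norm_mul]
  calc ‖1/(1+t)‖ * ‖G n t‖ ≤ 1 * (t ^ n / ((n:ℝ)+1)) := by
        apply mul_le_mul _ this (norm_nonneg _) zero_le_one
        rw [Real.norm_of_nonneg (by positivity : (0:ℝ) ≤ 1/(1+t))]
        rw [div_le_one (by linarith)]; linarith
    _ = t ^ n / ((n:ℝ)+1) := one_mul _

lemma G_intOn (n : ℕ) : IntegrableOn (G n) (Ioo 0 1) := by
  apply (Continuous.integrableOn_Icc ?_).mono_set (Ioo_subset_Icc_self (a := (0:ℝ)) (b := 1))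
  exact continuous_const.mul (continuous_pow n)

lemma F_intOn (n : ℕ) : IntegrableOn (F n) (Ioo 0 1) := by
  have : F n = fun t => ((-1)^n / ((n:ℝ)+1)) * (t ^ n / (1 + t)) := by
    funext t; rw [F]; ring
  rw [this]
  exact (intOn n).const_mul _

lemma hasSum_G (t : ℝ) (ht : t ∈ Ioo (0:ℝ) 1) :
    HasSum (fun n => G n t) (Real.log (1+t) / t) := by
  have ht0 : t ≠ 0 := ne_of_gt ht.1
  have h0 := hasSum_pow_div_log_of_abs_lt_one
    (x := -t) (by rw [abs_neg, abs_of_pos ht.1]; exact ht.2)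
  rw [sub_neg_eq_add] at h0
  have h1 := h0.mul_left (-1/t)
  have hfun : (fun n : ℕ => (-1/t) * ((-t)^(n+1)/((n:ℝ)+1))) = fun n : ℕ => G n t := by
    funext n
    rw [G, show (-t) = (-1)*t by ring, mul_pow]
    have hn : ((n:ℝ)+1) ≠ 0 := by positivity
    field_simp
    ring
  rw [hfun] at h1
  convert (show HasSum (fun n => G n t) (-1 / t * -Real.log (1 + t)) from h1) using 1
  field_simp

lemma hasSum_F (t : ℝ) (ht : t ∈ Ioo (0:ℝ) 1) :
    HasSum (fun n => F n t) ((1/(1+t)) * (Real.log (1+t) / t)) :=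
  (hasSum_G t ht).mul_left _

lemma summable_norm_int_G : Summable fun n => ∫ t in Ioo (0:ℝ) 1, ‖G n t‖ := by
  apply Summable.of_nonneg_of_le (fun n => integral_nonneg (fun t => norm_nonneg _))
    (fun n => norm_int_bound n (G n) (G_intOn n) (G_bound n)) hasSum_g.summable

lemma summable_norm_int_F : Summable fun n => ∫ t in Ioo (0:ℝ) 1, ‖F n t‖ := by
  apply Summable.of_nonneg_of_le (fun n => integral_nonneg (fun t => norm_nonneg _))
    (fun n => norm_int_bound n (F n) (F_intOn n) (F_bound n)) hasSum_g.summable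

lemma int_G (n : ℕ) : ∫ t in Ioo (0:ℝ) 1, G n t = (-1)^n / ((n:ℝ)+1)^2 := by
  simp only [G]
  rw [MeasureTheory.integral_const_mul, Ioo_int_eq, integral_pow]
  push_cast
  rw [one_pow, zero_pow (by positivity)]
  field_simp
  ring

lemma int_log_div_self : ∫ t in Ioo (0:ℝ) 1, Real.log (1+t) / t = π ^ 2 / 12 := by
  have hkey := hasSum_integral_of_summable_integral_norm
    (μ := volume.restrict (Ioo (0:ℝ) 1)) (F := G) G_intOn summable_norm_int_G
  have h1 : (∫ t in Ioo (0:ℝ) 1, ∑' n, G n t) = ∫ t in Ioo (0:ℝ) 1, Real.log (1+t) / t := by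
    apply setIntegral_congr_fun measurableSet_Ioo
    intro t ht
    exact (hasSum_G t ht).tsum_eq
  rw [h1] at hkey
  have h2 : HasSum (fun n : ℕ => (-1)^n / ((n:ℝ)+1)^2)
      (∫ t in Ioo (0:ℝ) 1, Real.log (1+t) / t) := by
    refine hkey.congr_fun fun n => ?_
    exact (int_G n).symm
  exact h2.unique hasSum_eta2

lemma int_log_div_one_add : ∫ t in Ioo (0:ℝ) 1, Real.log (1+t) / (1+t) = (Real.log 2)^2 / 2 := by
  rw [Ioo_int_eq]
  have h : ∀ t ∈ Set.uIcc (0:ℝ) 1,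
      HasDerivAt (fun t : ℝ => (Real.log (1 + t))^2 / 2) (Real.log (1+t) / (1+t)) t := by
    intro t ht
    rw [Set.uIcc_of_le (by norm_num : (0:ℝ) ≤ 1)] at ht
    have h1 : (0:ℝ) < 1 + t := by linarith [ht.1]
    have hl : HasDerivAt (fun t : ℝ => Real.log (1 + t)) (1 / (1 + t)) t := by
      have := ((hasDerivAt_id t).const_add 1).log h1.ne'
      simpa using this
    have := (show HasDerivAt (fun t : ℝ => (Real.log (1 + t))^2 / 2) (((2:ℕ):ℝ) * Real.log (1 + t) ^ (2 - 1) * (1 / (1 + t)) / 2) t from (hl.pow 2).div_const 2)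
    convert this using 1
    field_simp
    ring
  have hint : IntervalIntegrable (fun t : ℝ => Real.log (1+t) / (1+t)) volume 0 1 := by
    apply ContinuousOn.intervalIntegrable
    rw [Set.uIcc_of_le (by norm_num : (0:ℝ) ≤ 1)]
    apply ContinuousOn.div
    · apply ContinuousOn.log (by fun_prop)
      intro t ht; have := ht.1; intro hc; linarith
    · fun_prop
    · intro t ht; have := ht.1; intro hc; linarith
  rw [intervalIntegral.integral_eq_sub_of_hasDerivAt h hint]
  norm_num

lemma log_le_self' {t : ℝ} (ht : 0 < t) : Real.log (1 + t) ≤ t := by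
  have := Real.log_le_sub_one_of_pos (x := 1 + t) (by linarith)
  linarith

lemma int_log_onering : IntegrableOn (fun t : ℝ => Real.log (1+t) / t) (Ioo 0 1) := by
  apply Measure.integrableOn_of_bounded (M := 1)
  · rw [Real.volume_Ioo]; exact ENNReal.ofReal_ne_top
  · apply Measurable.aestronglyMeasurable
    exact (Real.measurable_log.comp (measurable_const.add measurable_id)).div measurable_id
  · rw [ae_restrict_iff' measurableSet_Ioo]
    filter_upwards with t ht
    have h0 : (0:ℝ) < t := ht.1
    have hle : Real.log (1 + t) ≤ t := log_le_self' h0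
    have hnn : 0 ≤ Real.log (1 + t) := Real.log_nonneg (by linarith)
    rw [Real.norm_of_nonneg (by positivity)]
    rw [div_le_one h0]
    exact hle

lemma int_log_oneaddring : IntegrableOn (fun t : ℝ => Real.log (1+t) / (1+t)) (Ioo 0 1) := by
  apply (ContinuousOn.integrableOn_Icc ?_).mono_set (Ioo_subset_Icc_self (a := (0:ℝ)) (b := 1))
  apply ContinuousOn.div
  · apply ContinuousOn.log (by fun_prop)
    intro t ht; have := ht.1; intro hc; linarith
  · fun_prop
  · intro t ht; have := ht.1; intro hc; linarith

lemma term_eq (n : ℕ) :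
    (Real.log 2 - skewH n) / ((n:ℝ)+1) = ∫ t in Ioo (0:ℝ) 1, F n t := by
  have hFeq : F n = fun t => ((-1)^n / ((n:ℝ)+1)) * (t ^ n / (1 + t)) := by
    funext t; rw [F]; ring
  simp only [hFeq]
  rw [MeasureTheory.integral_const_mul, Ioo_int_eq, ← II, key n]
  ring

theorem stmt13' :
    ∑' n : ℕ, (Real.log 2 - skewH n) / ((n : ℝ) + 1) =
      Real.pi ^ 2 / 12 - (Real.log 2) ^ 2 / 2 := by
  have hkey := hasSum_integral_of_summable_integral_norm
    (μ := volume.restrict (Ioo (0:ℝ) 1)) (F := F) F_intOn summable_norm_int_F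
  have h1 : (∫ t in Ioo (0:ℝ) 1, ∑' n, F n t)
      = ∫ t in Ioo (0:ℝ) 1, (Real.log (1+t) / t - Real.log (1+t) / (1+t)) := by
    apply setIntegral_congr_fun measurableSet_Ioo
    intro t ht
    show (∑' n, F n t) = _
    rw [(hasSum_F t ht).tsum_eq]
    have h0 : (0:ℝ) < t := ht.1
    have h1 : (0:ℝ) < 1 + t := by linarith
    field_simp
    ring
  have h2 : (∫ t in Ioo (0:ℝ) 1, (Real.log (1+t) / t - Real.log (1+t) / (1+t)))
      = π ^ 2 / 12 - (Real.log 2) ^ 2 / 2 := by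
    rw [integral_sub int_log_onering int_log_oneaddring, int_log_div_self, int_log_div_one_add]
  rw [h1, h2] at hkey
  have h3 : HasSum (fun n : ℕ => (Real.log 2 - skewH n) / ((n : ℝ) + 1))
      (π ^ 2 / 12 - (Real.log 2) ^ 2 / 2) := by
    refine hkey.congr_fun fun n => ?_
    exact term_eq n
  exact h3.tsum_eq

end Stmt13Aux

theorem stmt13 :
    ∑' n : ℕ, (Real.log 2 - skewH n) / ((n : ℝ) + 1) =
      Real.pi ^ 2 / 12 - (Real.log 2) ^ 2 / 2 := Stmt13Aux.stmt13'
end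

section
/- For every real β with |β| ≤ 1 and every natural p ≥ 0, ∫₀¹ (log x)^p · log((1-βx)/(1+βx)) / x dx = (-1)^{p+1} p! (Li_{p+2}(β) - Li_{p+2}(-β)). -/
open MeasureTheory Real

open Set


lemma image_exp_neg : (fun t : ℝ => Real.exp (-t)) '' Set.Ioi 0 = Set.Ioo 0 1 := by
  ext x
  constructor
  · rintro ⟨t, ht, rfl⟩
    exact ⟨Real.exp_pos _, Real.exp_lt_one_iff.mpr (by simpa using ht)⟩
  · rintro ⟨hx0, hx1⟩
    exact ⟨-Real.log x, by simpa using Real.log_neg hx0 hx1, by simp [Real.exp_log hx0]⟩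

lemma deriv_exp_neg (t : ℝ) : HasDerivAt (fun t : ℝ => Real.exp (-t)) (-Real.exp (-t)) t := by
  simpa using (hasDerivAt_neg t).exp

lemma inj_exp_neg : Set.InjOn (fun t : ℝ => Real.exp (-t)) (Set.Ioi 0) := fun a _ b _ hab => by
  have := Real.exp_injective hab
  linarith [neg_inj.mp this]

lemma eqon_aux (n p : ℕ) : ∀ t ∈ Set.Ioi (0:ℝ),
    |(-Real.exp (-t))| • ((Real.exp (-t)) ^ n * Real.log (Real.exp (-t)) ^ p)
      = (-1 : ℝ) ^ p * (t ^ (((p:ℝ) + 1) - 1) * Real.exp (-(((n:ℝ) + 1) * t))) := by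
  intro t ht
  rw [abs_neg, abs_of_pos (Real.exp_pos _), Real.log_exp, smul_eq_mul]
  rw [show ((p:ℝ) + 1) - 1 = (p:ℝ) by ring, Real.rpow_natCast]
  rw [← Real.exp_nat_mul, neg_pow]
  rw [show Real.exp (-t) * (Real.exp (↑n * -t) * ((-1:ℝ)^p * t^p))
      = (-1:ℝ)^p * (t^p * (Real.exp (-t) * Real.exp (↑n * -t))) from by ring, ← Real.exp_add]
  ring_nf

lemma lem1 (n p : ℕ) :
    ∫ x in Set.Ioo (0:ℝ) 1, x ^ n * Real.log x ^ p
      = (-1 : ℝ) ^ p * (Nat.factorial p : ℝ) / ((n : ℝ) + 1) ^ (p + 1) := by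
  rw [← image_exp_neg,
    integral_image_eq_integral_abs_deriv_smul measurableSet_Ioi
      (fun t _ => (deriv_exp_neg t).hasDerivWithinAt) inj_exp_neg]
  rw [setIntegral_congr_fun measurableSet_Ioi (eqon_aux n p), integral_const_mul,
    integral_rpow_mul_exp_neg_mul_Ioi (by positivity) (by positivity)]
  rw [Real.Gamma_nat_eq_factorial]
  rw [show ((p:ℝ) + 1) = ((p + 1 : ℕ) : ℝ) by push_cast; ring, Real.rpow_natCast]
  rw [div_pow, one_pow]
  field_simp

lemma lem1_int (n p : ℕ) :
    IntegrableOn (fun x : ℝ => x ^ n * Real.log x ^ p) (Set.Ioo (0:ℝ) 1) := by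
  rw [← image_exp_neg,
    integrableOn_image_iff_integrableOn_abs_deriv_smul measurableSet_Ioi
      (fun t _ => (deriv_exp_neg t).hasDerivWithinAt) inj_exp_neg]
  have base : IntegrableOn (fun t : ℝ => t ^ ((p:ℝ)) * Real.exp (-(((n:ℝ)+1)) * t ^ (1:ℝ)))
      (Set.Ioi (0:ℝ)) :=
    integrableOn_rpow_mul_exp_neg_mul_rpow
      (neg_one_lt_zero.trans_le (Nat.cast_nonneg p)) one_pos (by positivity)
  have base2 : IntegrableOn
      (fun t : ℝ => ((-1:ℝ)^p) * (t ^ ((p:ℝ)) * Real.exp (-(((n:ℝ)+1)) * t ^ (1:ℝ))))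
      (Set.Ioi (0:ℝ)) := base.const_mul _
  refine base2.congr_fun (fun t ht => ?_) measurableSet_Ioi
  have h2 := eqon_aux n p t ht
  rw [show ((p:ℝ) + 1) - 1 = (p:ℝ) by ring] at h2
  rw [h2]
  simp only [Real.rpow_one, neg_mul]

lemma lem_abs (n p : ℕ) :
    ∫ x in Set.Ioo (0:ℝ) 1, x ^ n * |Real.log x| ^ p
      = (Nat.factorial p : ℝ) / ((n : ℝ) + 1) ^ (p + 1) := by
  have : ∀ x ∈ Set.Ioo (0:ℝ) 1,
      x ^ n * |Real.log x| ^ p = (-1:ℝ)^p * (x ^ n * Real.log x ^ p) := by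
    intro x hx
    rw [abs_of_neg (Real.log_neg hx.1 hx.2)]
    ring
  rw [setIntegral_congr_fun measurableSet_Ioo this, integral_const_mul, lem1]
  rw [← mul_div_assoc, ← mul_assoc, ← mul_pow]
  norm_num

lemma hsum2 : Summable (fun k : ℕ => (1:ℝ) / ((k:ℝ) + 1) ^ 2) := by
  have := (Real.summable_one_div_nat_pow (p := 2)).mpr (by norm_num)
  have := (summable_nat_add_iff 1).mpr this
  refine this.congr fun k => ?_
  push_cast
  ring_nf

lemma summable_li (q : ℕ) (hq : 2 ≤ q) (β : ℝ) (h : |β| ≤ 1) :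
    Summable (fun n : ℕ => β ^ (n + 1) / ((n : ℝ) + 1) ^ q) := by
  refine Summable.of_norm_bounded hsum2 fun n => ?_
  rw [norm_div, norm_pow, norm_pow]
  have h1 : (1:ℝ) ≤ (n:ℝ) + 1 := by linarith [Nat.cast_nonneg (α := ℝ) n]
  have hd : ((n:ℝ) + 1) ^ 2 ≤ ‖(n:ℝ) + 1‖ ^ q := by
    rw [Real.norm_of_nonneg (by positivity)]
    exact pow_le_pow_right₀ h1 hq
  have hn : ‖β‖ ^ (n+1) ≤ 1 := pow_le_one₀ (norm_nonneg _) h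
  exact div_le_div₀ zero_le_one hn (by positivity) hd

noncomputable def Li (q : ℕ) (x : ℝ) : ℝ := ∑' n : ℕ, x ^ (n + 1) / ((n : ℝ) + 1) ^ q

theorem stmt14 (β : ℝ) (h : |β| ≤ 1) (p : ℕ) :
    ∫ x in (0:ℝ)..1, (Real.log x) ^ p * Real.log ((1 - β * x) / (1 + β * x)) / x =
      (-1) ^ (p + 1) * (Nat.factorial p : ℝ) * (Li (p + 2) β - Li (p + 2) (-β)) := by
  have hcast : ∀ k : ℕ, ((2 * k + 1 : ℕ) : ℝ) = 2 * (k : ℝ) + 1 := by intro k; push_cast; ring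
  set c : ℕ → ℝ := fun k => -(2 * (1 / (2 * (k : ℝ) + 1)) * β ^ (2 * k + 1)) with hc
  set F : ℕ → ℝ → ℝ := fun k x => c k * (x ^ (2 * k) * Real.log x ^ p) with hF
  -- pointwise expansion
  have hpt : ∀ x ∈ Set.Ioo (0:ℝ) 1, HasSum (fun k => F k x)
      (Real.log x ^ p * Real.log ((1 - β * x) / (1 + β * x)) / x) := by
    intro x hx
    have hx0 : 0 < x := hx.1
    have hb : |β * x| < 1 := by
      rw [abs_mul, abs_of_pos hx0]
      calc |β| * x ≤ 1 * x := mul_le_mul_of_nonneg_right h hx0.le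
        _ = x := one_mul x
        _ < 1 := hx.2
    have h1 : 0 < 1 - β * x := by have := (abs_lt.mp hb).2; linarith
    have h2 : 0 < 1 + β * x := by have := (abs_lt.mp hb).1; linarith
    have hS := (hasSum_log_sub_log_of_abs_lt_one hb).mul_left (-(Real.log x ^ p) / x)
    convert hS using 1
    · exact rfl
    · funext k
      rw [hF, hc, mul_pow]
      field_simp
      ring
    · rw [Real.log_div h1.ne' h2.ne']
      ring
  -- integrability of each term
  have hFint : ∀ k, IntegrableOn (F k) (Set.Ioo (0:ℝ) 1) := fun k =>
    (lem1_int (2 * k) p).const_mul (c k)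
  -- value of norm integrals
  have hck : ∀ k, |c k| ≤ 2 / (2 * (k : ℝ) + 1) := by
    intro k
    have hk1 : (0:ℝ) < 2 * (k : ℝ) + 1 := by positivity
    rw [hc, abs_neg, abs_mul, abs_mul, abs_pow, abs_two,
      abs_of_pos (by positivity : (0:ℝ) < 1 / (2 * (k:ℝ) + 1))]
    calc 2 * (1 / (2 * (k:ℝ) + 1)) * |β| ^ (2 * k + 1)
        ≤ 2 * (1 / (2 * (k:ℝ) + 1)) * 1 :=
          mul_le_mul_of_nonneg_left (pow_le_one₀ (abs_nonneg _) h) (by positivity)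
      _ = 2 / (2 * (k:ℝ) + 1) := by ring
  have hnormval : ∀ k, ∫ a in Set.Ioo (0:ℝ) 1, ‖F k a‖
      = |c k| * ((p.factorial : ℝ) / (2 * (k:ℝ) + 1) ^ (p + 1)) := by
    intro k
    have heq : ∀ a ∈ Set.Ioo (0:ℝ) 1, ‖F k a‖ = |c k| * (a ^ (2 * k) * |Real.log a| ^ p) := by
      intro a ha
      rw [hF]
      simp only [Real.norm_eq_abs, abs_mul, abs_pow, abs_of_pos ha.1]
    rw [setIntegral_congr_fun measurableSet_Ioo heq, integral_const_mul, lem_abs]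
    push_cast
    ring_nf
  have hFnorm : Summable fun k => ∫ a in Set.Ioo (0:ℝ) 1, ‖F k a‖ := by
    refine Summable.of_nonneg_of_le
      (fun k => integral_nonneg fun a => norm_nonneg _)
      (fun k => ?_) (hsum2.mul_left (2 * (p.factorial : ℝ)))
    have hk1 : (0:ℝ) < 2 * (k : ℝ) + 1 := by positivity
    have hpow : ((k:ℝ) + 1) ^ 2 ≤ (2 * (k:ℝ) + 1) ^ (p + 2) := by
      calc ((k:ℝ) + 1) ^ 2 ≤ (2 * (k:ℝ) + 1) ^ 2 := by
            gcongr <;> linarith [Nat.cast_nonneg (α := ℝ) k]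
        _ ≤ (2 * (k:ℝ) + 1) ^ (p + 2) :=
            pow_le_pow_right₀ (by linarith [Nat.cast_nonneg (α := ℝ) k]) (by omega)
    calc ∫ a in Set.Ioo (0:ℝ) 1, ‖F k a‖
        = |c k| * ((p.factorial : ℝ) / (2 * (k:ℝ) + 1) ^ (p + 1)) := hnormval k
      _ ≤ (2 / (2 * (k:ℝ) + 1)) * ((p.factorial : ℝ) / (2 * (k:ℝ) + 1) ^ (p + 1)) :=
          mul_le_mul_of_nonneg_right (hck k) (by positivity)
      _ = 2 * (p.factorial : ℝ) / (2 * (k:ℝ) + 1) ^ (p + 2) := by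
          rw [div_mul_div_comm, ← pow_succ']
      _ ≤ 2 * (p.factorial : ℝ) * (1 / ((k:ℝ) + 1) ^ 2) := by
          rw [mul_one_div]
          exact div_le_div₀ (by positivity) le_rfl (by positivity) hpow
  -- value of each integral
  have hint : ∀ k, ∫ a in Set.Ioo (0:ℝ) 1, F k a
      = (-1:ℝ) ^ (p + 1) * (p.factorial : ℝ) * (2 * β ^ (2 * k + 1) / (2 * (k:ℝ) + 1) ^ (p + 2)) := by
    intro k
    have hk1 : (0:ℝ) < 2 * (k : ℝ) + 1 := by positivity
    rw [hF]
    rw [integral_const_mul, lem1, hc]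
    push_cast
    rw [show p + 2 = (p + 1) + 1 from rfl, pow_succ (2 * (k:ℝ) + 1) (p+1), pow_succ (-1:ℝ) p]
    field_simp
  -- the series for Li difference
  have hA := summable_li (p + 2) (by omega) β h
  have hB := summable_li (p + 2) (by omega) (-β) (by rwa [abs_neg])
  set g : ℕ → ℝ := fun n => (β ^ (n + 1) - (-β) ^ (n + 1)) / ((n : ℝ) + 1) ^ (p + 2) with hg
  have hgsum : Summable g := by
    refine (hA.sub hB).congr fun n => ?_
    exact (sub_div _ _ _).symm
  have hsupp : ∀ n ∉ Set.range (fun k : ℕ => 2 * k), g n = 0 := by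
    intro n hn
    have hne : ¬ Even n := fun ⟨m, hm⟩ => hn ⟨m, by dsimp; omega⟩
    have heven : Even (n + 1) := Nat.even_add_one.mpr hne
    show (β ^ (n + 1) - (-β) ^ (n + 1)) / ((n : ℝ) + 1) ^ (p + 2) = 0
    rw [heven.neg_pow]
    simp
  have hinj2 : Function.Injective (fun k : ℕ => 2 * k) := fun a b hab => by
    dsimp at hab; omega
  have hg2 : ∑' k : ℕ, g (2 * k) = ∑' n, g n :=
    ((hinj2.hasSum_iff hsupp).mpr hgsum.hasSum).tsum_eq
  have hg2k : ∀ k : ℕ, g (2 * k) = 2 * β ^ (2 * k + 1) / (2 * (k:ℝ) + 1) ^ (p + 2) := by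
    intro k
    show (β ^ (2 * k + 1) - (-β) ^ (2 * k + 1)) / (((2 * k : ℕ) : ℝ) + 1) ^ (p + 2)
      = 2 * β ^ (2 * k + 1) / (2 * (k:ℝ) + 1) ^ (p + 2)
    rw [Odd.neg_pow ⟨k, rfl⟩ β, sub_neg_eq_add, show ((2 * k : ℕ) : ℝ) + 1 = 2 * (k:ℝ) + 1 by
      push_cast; ring]
    ring
  have hdiff : Li (p + 2) β - Li (p + 2) (-β)
      = ∑' k : ℕ, 2 * β ^ (2 * k + 1) / (2 * (k:ℝ) + 1) ^ (p + 2) := by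
    rw [Li, Li, ← Summable.tsum_sub hA hB, show (∑' n : ℕ, (β ^ (n+1) / ((n:ℝ)+1) ^ (p+2)
        - (-β) ^ (n+1) / ((n:ℝ)+1) ^ (p+2))) = ∑' n, g n from
        tsum_congr fun n => (sub_div _ _ _).symm, ← hg2]
    exact tsum_congr fun k => hg2k k
  -- put it together
  rw [intervalIntegral.integral_of_le zero_le_one, MeasureTheory.integral_Ioc_eq_integral_Ioo,
    setIntegral_congr_fun measurableSet_Ioo (fun x hx => ((hpt x hx).tsum_eq).symm),
    ← MeasureTheory.integral_tsum_of_summable_integral_norm hFint hFnorm]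
  rw [show (∑' k : ℕ, ∫ a in Set.Ioo (0:ℝ) 1, F k a)
      = ∑' k : ℕ, ((-1:ℝ) ^ (p+1) * (p.factorial : ℝ)
          * (2 * β ^ (2 * k + 1) / (2 * (k:ℝ) + 1) ^ (p + 2))) from tsum_congr hint,
    tsum_mul_left, hdiff]
end

section
/- ∫₀^∞ arctan(t) · arctan(1/t) / t dt = (7/4) ζ(3). -/
open MeasureTheory Real Set Filter Topology

noncomputable def Fint (u v t : ℝ) : ℝ := t / ((1 + (t*u)^2) * (t^2 + v^2))

lemma arctan_eq_integral {t : ℝ} : arctan t = ∫ u in (0:ℝ)..1, t/(1+(t*u)^2) := by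
  have h : ∀ u ∈ Set.uIcc (0:ℝ) 1, HasDerivAt (fun u => arctan (t*u)) (t/(1+(t*u)^2)) u := by
    intro u _
    have h1 : HasDerivAt (fun u : ℝ => t*u) t u := by
      simpa using (hasDerivAt_id u).const_mul t
    have := (Real.hasDerivAt_arctan (t*u)).comp u h1
    refine this.congr_deriv (Eq.symm ?_)
    field_simp
  rw [intervalIntegral.integral_eq_sub_of_hasDerivAt h]
  · simp
  · apply Continuous.intervalIntegrable
    apply Continuous.div continuous_const (by continuity)
    intro u; positivity

lemma arctan_inv_eq_integral {t : ℝ} (ht : 0 < t) :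
    arctan (1/t) = ∫ v in (0:ℝ)..1, t/(t^2+v^2) := by
  have h : ∀ v ∈ Set.uIcc (0:ℝ) 1, HasDerivAt (fun v => arctan (v/t)) (t/(t^2+v^2)) v := by
    intro v _
    have h1 : HasDerivAt (fun v : ℝ => v/t) (1/t) v := by
      simpa using (hasDerivAt_id v).div_const t
    have := (Real.hasDerivAt_arctan (v/t)).comp v h1
    refine this.congr_deriv (Eq.symm ?_)
    have h2 : (1:ℝ) + (v/t)^2 = (t^2+v^2)/t^2 := by field_simp
    rw [h2]
    field_simp
  rw [intervalIntegral.integral_eq_sub_of_hasDerivAt h]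
  · simp
  · apply Continuous.intervalIntegrable
    apply Continuous.div continuous_const (by continuity)
    intro v
    have : t^2 + v^2 > 0 := by positivity
    linarith

lemma hrep {t : ℝ} (ht : 0 < t) :
    arctan t * arctan (1/t) / t = ∫ u in Ioc (0:ℝ) 1, ∫ v in Ioc (0:ℝ) 1, Fint u v t := by
  have e1 : arctan t * arctan (1/t) / t = ∫ u in (0:ℝ)..1, (t/(1+(t*u)^2)) * (arctan (1/t) / t) := by
    rw [intervalIntegral.integral_mul_const, ← arctan_eq_integral]; ring
  rw [e1, intervalIntegral.integral_of_le zero_le_one]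
  apply setIntegral_congr_fun measurableSet_Ioc
  intro u _
  have e2 : arctan (1/t) = ∫ v in Ioc (0:ℝ) 1, t/(t^2+v^2) := by
    rw [← intervalIntegral.integral_of_le zero_le_one, ← arctan_inv_eq_integral ht]
  simp only
  have h1 : (1:ℝ)+(t*u)^2 ≠ 0 := by positivity
  rw [e2]
  have key : ∀ v:ℝ, Fint u v t = (1/(1+(t*u)^2)) * (t/(t^2+v^2)) := by
    intro v; unfold Fint; rw [div_mul_div_comm, one_mul]
  calc t / (1+(t*u)^2) * ((∫ v in Ioc (0:ℝ) 1, t/(t^2+v^2)) / t)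
      = (1/(1+(t*u)^2)) * ∫ v in Ioc (0:ℝ) 1, t/(t^2+v^2) := by
        field_simp
    _ = ∫ v in Ioc (0:ℝ) 1, Fint u v t := by
        rw [← integral_const_mul]
        simp only [key]

lemma Fint_integrableOn {u v : ℝ} (hu : 0 < u) (hv : 0 < v) :
    IntegrableOn (fun t => Fint u v t) (Ioi (0:ℝ)) := by
  have hcont : Continuous (fun t => Fint u v t) := by
    apply Continuous.div (by continuity) (by continuity)
    intro t
    have h1 : (0:ℝ) < 1 + (t*u)^2 := by positivity
    have h2 : (0:ℝ) < t^2 + v^2 := by positivity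
    positivity
  have hsplit : Ioi (0:ℝ) = Ioc (0:ℝ) 1 ∪ Ioi (1:ℝ) := by
    rw [Ioc_union_Ioi_eq_Ioi]; norm_num
  rw [hsplit]
  apply IntegrableOn.union
  · exact hcont.integrableOn_Ioc
  · apply Integrable.mono' ((integrableOn_Ioi_rpow_of_lt (by norm_num : (-3:ℝ) < -1)
      one_pos).const_mul (u^2)⁻¹)
    · exact hcont.aestronglyMeasurable.restrict
    · filter_upwards [ae_restrict_mem measurableSet_Ioi] with t (ht : 1 < t)
      have ht0 : (0:ℝ) < t := lt_trans one_pos ht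
      have hFnn : 0 ≤ Fint u v t := by
        unfold Fint
        have h1 : (0:ℝ) < 1 + (t*u)^2 := by positivity
        have h2 : (0:ℝ) < t^2 + v^2 := by positivity
        positivity
      rw [Real.norm_of_nonneg hFnn]
      have hb : Fint u v t ≤ t / ((t*u)^2 * t^2) := by
        unfold Fint
        apply div_le_div_of_nonneg_left ht0.le (by positivity)
        have h1 : (t*u)^2 ≤ 1 + (t*u)^2 := by linarith [sq_nonneg (t*u)]
        have h2 : t^2 ≤ t^2 + v^2 := by nlinarith [sq_nonneg v]
        calc (t*u)^2 * t^2 ≤ (1+(t*u)^2) * t^2 := by nlinarith [sq_nonneg t]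
          _ ≤ (1+(t*u)^2) * (t^2+v^2) := by nlinarith [sq_nonneg (t*u)]
      refine hb.trans (le_of_eq ?_)
      rw [Real.rpow_neg ht0.le, show ((3:ℝ) = ((3:ℕ):ℝ)) by norm_num, Real.rpow_natCast]
      field_simp

lemma Fint_integral {u v : ℝ} (hu : u ∈ Ioo (0:ℝ) 1) (hv : v ∈ Ioc (0:ℝ) 1) :
    ∫ t in Ioi (0:ℝ), Fint u v t = (-log u - log v)/(1-(u*v)^2) := by
  obtain ⟨hu0, hu1⟩ := hu
  obtain ⟨hv0, hv1⟩ := hv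
  have huv : u * v < 1 := lt_of_le_of_lt (by nlinarith) hu1
  have hD : (0:ℝ) < 1 - (u*v)^2 := by nlinarith [mul_pos hu0 hv0]
  set D : ℝ := 1 - (u*v)^2 with hDdef
  set c : ℝ := 1/(2*D) with hcdef
  set F : ℝ → ℝ := fun t => c * (log (t^2+v^2) - log (1+(u*t)^2)) with hFdef
  have hpos1 : ∀ t : ℝ, (0:ℝ) < t^2 + v^2 := fun t => by positivity
  have hpos2 : ∀ t : ℝ, (0:ℝ) < 1 + (u*t)^2 := fun t => by positivity
  have hderiv : ∀ t ∈ Ioi (0:ℝ), HasDerivAt F (Fint u v t) t := by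
    intro t _
    have d1 : HasDerivAt (fun t : ℝ => log (t^2+v^2)) ((t^2+v^2)⁻¹ * (2*t)) t := by
      have h1 : HasDerivAt (fun t : ℝ => t^2+v^2) (2*t) t := by
        have := (hasDerivAt_pow 2 t).add_const (v^2)
        refine this.congr_deriv (Eq.symm ?_); push_cast; ring
      exact (Real.hasDerivAt_log (hpos1 t).ne').comp t h1
    have d2 : HasDerivAt (fun t : ℝ => log (1+(u*t)^2)) ((1+(u*t)^2)⁻¹ * (2*u^2*t)) t := by
      have h1 : HasDerivAt (fun t : ℝ => 1+(u*t)^2) (2*u^2*t) t := by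
        have hu' : HasDerivAt (fun t : ℝ => u*t) u t := by
          simpa using (hasDerivAt_id t).const_mul u
        have := (hu'.pow 2).const_add 1
        refine this.congr_deriv (Eq.symm ?_); push_cast; ring
      exact (Real.hasDerivAt_log (hpos2 t).ne').comp t h1
    have hd := (d1.sub d2).const_mul c
    refine hd.congr_deriv (Eq.symm ?_)
    unfold Fint
    have e1 : (1:ℝ) + (t*u)^2 ≠ 0 := by positivity
    have e2 : (t^2+v^2) ≠ 0 := (hpos1 t).ne'
    have e3 : (1:ℝ) + (u*t)^2 ≠ 0 := (hpos2 t).ne'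
    have hDne : D ≠ 0 := hD.ne'
    rw [hcdef]
    field_simp
    rw [hDdef]
    ring
  have hFcont : ∀ t : ℝ, ContinuousAt F t := by
    intro t
    apply ContinuousAt.mul continuousAt_const
    apply ContinuousAt.sub
    · exact ContinuousAt.log (by fun_prop) (hpos1 t).ne'
    · exact ContinuousAt.log (by fun_prop) (hpos2 t).ne'
  have hr : Tendsto (fun t : ℝ => (t^2+v^2)/(1+(u*t)^2)) atTop (𝓝 (1/u^2)) := by
    have hnum : Tendsto (fun t : ℝ => 1 + v^2/t^2) atTop (𝓝 1) := by
      have := Tendsto.div_atTop (tendsto_const_nhds (x := v^2)) (tendsto_pow_atTop two_ne_zero)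
      simpa using tendsto_const_nhds.add this
    have hden : Tendsto (fun t : ℝ => 1/t^2 + u^2) atTop (𝓝 (u^2)) := by
      have := Tendsto.div_atTop (tendsto_const_nhds (x := (1:ℝ))) (tendsto_pow_atTop two_ne_zero)
      simpa using this.add (tendsto_const_nhds (x := u^2))
    have hdiv := hnum.div hden (by positivity)
    apply hdiv.congr'
    filter_upwards [eventually_gt_atTop (0:ℝ)] with t ht
    have ht' : t ≠ 0 := ht.ne'
    have : (1+v^2/t^2)/(1/t^2+u^2) = (t^2+v^2)/(1+(u*t)^2) := by
      rw [div_eq_div_iff (by positivity) (by positivity)]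
      field_simp
      try ring
      try tauto
    simpa [Pi.div_apply] using this
  have hlim : Tendsto F atTop (𝓝 (c * (-2 * log u))) := by
    have hlog : Tendsto (fun t : ℝ => log ((t^2+v^2)/(1+(u*t)^2))) atTop (𝓝 (log (1/u^2))) :=
      ((Real.continuousAt_log (by positivity)).tendsto).comp hr
    have heq : ∀ t : ℝ, F t = c * log ((t^2+v^2)/(1+(u*t)^2)) := by
      intro t
      rw [hFdef]
      simp only
      rw [Real.log_div (hpos1 t).ne' (hpos2 t).ne']
    have hlogu : log (1/u^2) = -2 * log u := by
      rw [one_div, Real.log_inv, Real.log_pow]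
      push_cast; ring
    rw [show c * (-2 * log u) = c * log (1/u^2) by rw [hlogu]]
    exact (hlog.const_mul c).congr (fun t => (heq t).symm)
  rw [MeasureTheory.integral_Ioi_of_hasDerivAt_of_tendsto
    (hFcont 0).continuousWithinAt hderiv (Fint_integrableOn hu0 hv0) hlim]
  have hF0 : F 0 = c * (2 * log v) := by
    have h01 : ((0:ℝ)^2 + v^2) = v^2 := by ring
    have h02 : ((1:ℝ) + (u*0)^2) = 1 := by ring
    rw [hFdef]
    simp only [h01, h02, Real.log_one, Real.log_pow]
    push_cast; ring
  rw [hF0, hcdef]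
  have hDne : D ≠ 0 := hD.ne'
  field_simp

lemma inner_v {t u : ℝ} (ht : 0 < t) :
    ∫ v in Ioc (0:ℝ) 1, Fint u v t = (1/(1+(t*u)^2)) * arctan (1/t) := by
  have e2 : arctan (1/t) = ∫ v in Ioc (0:ℝ) 1, t/(t^2+v^2) := by
    rw [← intervalIntegral.integral_of_le zero_le_one, ← arctan_inv_eq_integral ht]
  rw [e2, ← integral_const_mul]
  apply setIntegral_congr_fun measurableSet_Ioc
  intro v _
  show t / ((1+(t*u)^2)*(t^2+v^2)) = 1/(1+(t*u)^2) * (t/(t^2+v^2))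
  rw [div_mul_div_comm, one_mul]

lemma Fint_nonneg {t u v : ℝ} (ht : 0 < t) : 0 ≤ Fint u v t := by
  unfold Fint
  have h1 : (0:ℝ) < 1 + (t*u)^2 := by positivity
  have h2 : (0:ℝ) < t^2 + v^2 := by positivity
  positivity

lemma P_eval (k : ℕ) :
    ∫⁻ v in Ioc (0:ℝ) 1, ENNReal.ofReal (v^k) = ENNReal.ofReal (1/((k:ℝ)+1)) := by
  rw [← ofReal_integral_eq_lintegral_ofReal]
  · congr 1
    rw [← intervalIntegral.integral_of_le zero_le_one, integral_pow]
    norm_num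
  · exact (continuous_pow k).integrableOn_Ioc
  · filter_upwards [ae_restrict_mem measurableSet_Ioc] with v hv
    exact pow_nonneg hv.1.le k

lemma neg_log_le {v : ℝ} (hv : 0 < v) : -log v ≤ 2 * v^(-(1/2):ℝ) := by
  have hw : (0:ℝ) < v^((1/2):ℝ) := Real.rpow_pos_of_pos hv _
  have h1 : log (v^((1/2):ℝ)) = (1/2) * log v := Real.log_rpow hv _
  have h2 : log ((v^((1/2):ℝ))⁻¹) ≤ (v^((1/2):ℝ))⁻¹ - 1 :=
    Real.log_le_sub_one_of_pos (by positivity)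
  rw [Real.log_inv] at h2
  have h3 : v^(-(1/2):ℝ) = (v^((1/2):ℝ))⁻¹ := Real.rpow_neg hv.le _
  rw [h3]
  nlinarith [hw]

lemma neg_log_pow_intInt (k : ℕ) :
    IntervalIntegrable (fun v : ℝ => -log v * v^k) volume 0 1 := by
  rw [intervalIntegrable_iff_integrableOn_Ioc_of_le zero_le_one]
  have hdom : IntegrableOn (fun v : ℝ => 2 * v^(-(1/2):ℝ)) (Ioc (0:ℝ) 1) volume := by
    have := (intervalIntegral.intervalIntegrable_rpow' (show (-1:ℝ) < -(1/2) by norm_num) (a := (0:ℝ)) (b := 1))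
    rw [intervalIntegrable_iff_integrableOn_Ioc_of_le zero_le_one] at this
    exact this.const_mul 2
  apply Integrable.mono' hdom
  · exact ((Real.measurable_log.neg.mul (measurable_id.pow_const k)).aestronglyMeasurable).restrict
  · filter_upwards [ae_restrict_mem measurableSet_Ioc] with v hv
    have hv0 : 0 < v := hv.1
    have hln : 0 ≤ -log v := by
      simpa using Real.log_nonpos hv0.le hv.2
    have hpow : v^k ≤ 1 := pow_le_one₀ hv0.le hv.2
    rw [Real.norm_of_nonneg (mul_nonneg hln (pow_nonneg hv0.le k))]
    calc -log v * v^k ≤ -log v * 1 := by nlinarith [pow_nonneg hv0.le k]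
      _ = -log v := by ring
      _ ≤ 2 * v^(-(1/2):ℝ) := neg_log_le hv0

lemma neg_log_pow_integral (k : ℕ) :
    ∫ v in Ioc (0:ℝ) 1, (-log v) * v^k = 1/((k:ℝ)+1)^2 := by
  have hk : ((k:ℝ)+1) ≠ 0 := by positivity
  set G : ℝ → ℝ := fun v => (v^(k+1) - ((k:ℝ)+1) * (log v * v^(k+1)))/((k:ℝ)+1)^2 with hGdef
  have hderiv : ∀ v ∈ Ioo (0:ℝ) 1, HasDerivAt G (-log v * v^k) v := by
    intro v hv
    have hv0 : v ≠ 0 := hv.1.ne'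
    have d1 : HasDerivAt (fun v : ℝ => v^(k+1)) (((k:ℝ)+1) * v^k) v := by
      have := hasDerivAt_pow (k+1) v
      refine this.congr_deriv (Eq.symm ?_)
      push_cast; simp
    have d2 : HasDerivAt (fun v : ℝ => log v * v^(k+1))
        (v⁻¹ * v^(k+1) + log v * (((k:ℝ)+1) * v^k)) v :=
      (Real.hasDerivAt_log hv0).mul d1
    have := ((d1.sub (d2.const_mul (((k:ℝ)+1)))).div_const (((k:ℝ)+1)^2))
    refine this.congr_deriv (Eq.symm ?_)
    field_simp
    ring
  have h0 : Tendsto G (nhdsWithin 0 (Ioi 0)) (𝓝 0) := by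
    have h1 : Tendsto (fun v:ℝ => v^(k+1)) (nhdsWithin 0 (Ioi 0)) (𝓝 0) := by
      have := (continuous_pow (k+1) : Continuous fun v:ℝ => v^(k+1)).tendsto 0
      rw [zero_pow (Nat.succ_ne_zero k)] at this
      exact this.mono_left nhdsWithin_le_nhds
    have h2 : Tendsto (fun v:ℝ => log v * v^(k+1)) (nhdsWithin 0 (Ioi 0)) (𝓝 0) := by
      have := tendsto_log_mul_rpow_nhdsGT_zero (show (0:ℝ) < (k:ℝ)+1 by positivity)
      apply this.congr'
      filter_upwards [self_mem_nhdsWithin] with v (hv : v ∈ Ioi (0:ℝ))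
      rw [show ((k:ℝ)+1) = ((k+1 : ℕ):ℝ) by push_cast; ring, Real.rpow_natCast]
    have := (h1.sub (h2.const_mul (((k:ℝ)+1)))).div_const (((k:ℝ)+1)^2)
    simpa using this
  have h1' : Tendsto G (nhdsWithin 1 (Iio 1)) (𝓝 (1/((k:ℝ)+1)^2)) := by
    have hc : ContinuousAt G 1 := by
      apply ContinuousAt.div_const
      apply ContinuousAt.sub (by fun_prop)
      exact ContinuousAt.mul continuousAt_const
        ((Real.continuousAt_log one_ne_zero).mul (by fun_prop))
    have hG1 : G 1 = 1/((k:ℝ)+1)^2 := by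
      rw [hGdef]; simp
    rw [← hG1]
    exact hc.tendsto.mono_left nhdsWithin_le_nhds
  rw [← intervalIntegral.integral_of_le zero_le_one,
    intervalIntegral.integral_eq_sub_of_hasDerivAt_of_tendsto zero_lt_one hderiv
      (neg_log_pow_intInt k) h0 h1']
  ring

lemma Q_eval (k : ℕ) :
    ∫⁻ v in Ioc (0:ℝ) 1, ENNReal.ofReal ((-log v) * v^k)
      = ENNReal.ofReal (1/((k:ℝ)+1)^2) := by
  rw [← ofReal_integral_eq_lintegral_ofReal]
  · rw [neg_log_pow_integral k]
  · exact (intervalIntegrable_iff_integrableOn_Ioc_of_le zero_le_one).mp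
      (neg_log_pow_intInt k)
  · filter_upwards [ae_restrict_mem measurableSet_Ioc] with v hv
    have : 0 ≤ -log v := by simpa using Real.log_nonpos hv.1.le hv.2
    exact mul_nonneg this (pow_nonneg hv.1.le k)

lemma geom_expand {u v : ℝ} (hu : u ∈ Ioo (0:ℝ) 1) (hv : v ∈ Ioc (0:ℝ) 1) :
    ENNReal.ofReal ((-log u - log v)/(1-(u*v)^2))
      = ∑' n : ℕ, ENNReal.ofReal ((-log u - log v) * (u*v)^(2*n)) := by
  have hx0 : 0 ≤ u*v := mul_nonneg hu.1.le hv.1.le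
  have hx1 : u*v < 1 := lt_of_le_of_lt (by nlinarith [hu.1, hv.1, hv.2, hu.2]) hu.2
  have hc : 0 ≤ -log u - log v := by
    have h1 : log u ≤ 0 := Real.log_nonpos hu.1.le hu.2.le
    have h2 : log v ≤ 0 := Real.log_nonpos hv.1.le hv.2
    linarith
  have hsq : (u*v)^2 < 1 := by nlinarith
  have hsq0 : 0 ≤ (u*v)^2 := by positivity
  have hsummable : Summable (fun n : ℕ => ((u*v)^2)^n) := summable_geometric_of_lt_one hsq0 hsq
  have hgeom : ∑' n : ℕ, ((u*v)^2)^n = (1-(u*v)^2)⁻¹ := tsum_geometric_of_lt_one hsq0 hsq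
  have key : (-log u - log v)/(1-(u*v)^2) = ∑' n : ℕ, (-log u - log v) * (u*v)^(2*n) := by
    have he : ∑' n : ℕ, (-log u - log v) * (u*v)^(2*n)
        = ∑' n : ℕ, (-log u - log v) * ((u*v)^2)^n := by
      congr 1
      funext n
      rw [pow_mul]
    rw [he, tsum_mul_left, hgeom, div_eq_mul_inv]
  rw [key]
  apply ENNReal.ofReal_tsum_of_nonneg
  · intro n
    exact mul_nonneg hc (pow_nonneg hx0 _)
  · exact (hsummable.mul_left _).congr (fun n => by rw [pow_mul])

lemma summable_odd_cubes : Summable (fun n : ℕ => 2/(2*(n:ℝ)+1)^3) := by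
  have hS : Summable (fun n : ℕ => 1/((n:ℝ)+1)^3) := by
    have := (Real.summable_one_div_nat_pow (p := 3)).mpr (by norm_num)
    have h2 := (summable_nat_add_iff 1).mpr this
    apply h2.congr
    intro n
    push_cast
    ring
  apply Summable.of_nonneg_of_le (fun n => by positivity) _ (hS.mul_left 2)
  intro n
  rw [div_le_iff₀ (by positivity)]
  have h1 : ((n:ℝ)+1)^3 ≤ (2*(n:ℝ)+1)^3 := by
    apply pow_le_pow_left₀ (by positivity)
    · linarith [Nat.cast_nonneg (α := ℝ) n]
  calc (2:ℝ) = 2 * (1/((n:ℝ)+1)^3) * ((n:ℝ)+1)^3 := by field_simp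
    _ ≤ 2 * (1/((n:ℝ)+1)^3) * (2*(n:ℝ)+1)^3 := by
        apply mul_le_mul_of_nonneg_left h1 (by positivity)

lemma sum_odd_cubes : ∑' n : ℕ, 2/(2*(n:ℝ)+1)^3 = 7/4 * ∑' n : ℕ, 1/((n:ℝ)+1)^3 := by
  have hS : Summable (fun n : ℕ => 1/((n:ℝ)+1)^3) := by
    have := (Real.summable_one_div_nat_pow (p := 3)).mpr (by norm_num)
    have h2 := (summable_nat_add_iff 1).mpr this
    apply h2.congr
    intro n
    push_cast
    ring
  set f : ℕ → ℝ := fun n => 1/((n:ℝ)+1)^3 with hf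
  have heven : Summable (fun k : ℕ => f (2*k)) := by
    apply Summable.of_nonneg_of_le (fun n => by positivity) _ hS
    intro n
    apply div_le_div_of_nonneg_left one_pos.le (by positivity)
    · apply pow_le_pow_left₀ (by positivity)
      push_cast
      linarith [Nat.cast_nonneg (α := ℝ) n]
  have hodd : Summable (fun k : ℕ => f (2*k+1)) := by
    apply Summable.of_nonneg_of_le (fun n => by positivity) _ hS
    intro n
    apply div_le_div_of_nonneg_left one_pos.le (by positivity)
    · apply pow_le_pow_left₀ (by positivity)
      push_cast
      linarith [Nat.cast_nonneg (α := ℝ) n]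
  have hsplit := tsum_even_add_odd heven hodd
  have hodd_eq : ∑' k : ℕ, f (2*k+1) = (1/8) * ∑' n : ℕ, f n := by
    rw [← tsum_mul_left]
    congr 1
    funext k
    rw [hf]
    simp only
    push_cast
    field_simp
    ring
  have h2 : ∑' n : ℕ, 2/(2*(n:ℝ)+1)^3 = 2 * ∑' k : ℕ, f (2*k) := by
    rw [← tsum_mul_left]
    congr 1
    funext k
    rw [hf]
    simp only
    push_cast
    ring
  rw [h2]
  rw [hodd_eq] at hsplit
  linarith [hsplit]

lemma term_eval (n : ℕ) :
    (∫⁻ u in Ioo (0:ℝ) 1, ∫⁻ v in Ioc (0:ℝ) 1,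
      ENNReal.ofReal ((-log u - log v) * (u*v)^(2*n)))
      = ENNReal.ofReal (2/(2*(n:ℝ)+1)^3) := by
  set k := 2*n with hk
  have hmeas_pow : Measurable (fun v : ℝ => ENNReal.ofReal (v^k)) :=
    ENNReal.measurable_ofReal.comp (measurable_id.pow_const k)
  have hmeas_lp : Measurable (fun v : ℝ => ENNReal.ofReal ((-log v) * v^k)) :=
    ENNReal.measurable_ofReal.comp (Real.measurable_log.neg.mul (measurable_id.pow_const k))
  have step1 : ∀ u ∈ Ioo (0:ℝ) 1,
      (∫⁻ v in Ioc (0:ℝ) 1, ENNReal.ofReal ((-log u - log v) * (u*v)^k))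
        = ENNReal.ofReal ((-log u) * u^k) * ENNReal.ofReal (1/((k:ℝ)+1))
          + ENNReal.ofReal (u^k) * ENNReal.ofReal (1/((k:ℝ)+1)^2) := by
    intro u hu
    have hlu : 0 ≤ -log u := by simpa using Real.log_nonpos hu.1.le hu.2.le
    have hup : 0 ≤ u^k := pow_nonneg hu.1.le k
    have hptwise : ∀ v ∈ Ioc (0:ℝ) 1,
        ENNReal.ofReal ((-log u - log v) * (u*v)^k)
          = ENNReal.ofReal ((-log u) * u^k) * ENNReal.ofReal (v^k)
            + ENNReal.ofReal (u^k) * ENNReal.ofReal ((-log v) * v^k) := by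
      intro v hv
      have hlv : 0 ≤ -log v := by simpa using Real.log_nonpos hv.1.le hv.2
      have hvp : 0 ≤ v^k := pow_nonneg hv.1.le k
      rw [← ENNReal.ofReal_mul (by positivity), ← ENNReal.ofReal_mul hup,
        ← ENNReal.ofReal_add (by positivity) (by positivity)]
      congr 1
      rw [mul_pow]
      ring
    rw [setLIntegral_congr_fun measurableSet_Ioc hptwise]
    rw [lintegral_add_left (hmeas_pow.const_mul _)]
    rw [lintegral_const_mul _ hmeas_pow, lintegral_const_mul _ hmeas_lp]
    rw [P_eval, Q_eval]
  rw [setLIntegral_congr_fun measurableSet_Ioo step1]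
  have hmeas_lpu : Measurable (fun u : ℝ =>
      ENNReal.ofReal ((-log u) * u^k) * ENNReal.ofReal (1/((k:ℝ)+1))) :=
    hmeas_lp.mul_const _
  rw [lintegral_add_left hmeas_lpu]
  rw [lintegral_mul_const _ hmeas_lp, lintegral_mul_const _ hmeas_pow]
  rw [setLIntegral_congr (Ioo_ae_eq_Ioc (a := (0:ℝ)) (b := 1)),
    setLIntegral_congr (Ioo_ae_eq_Ioc (a := (0:ℝ)) (b := 1))]
  rw [P_eval, Q_eval]
  rw [← ENNReal.ofReal_mul (by positivity), ← ENNReal.ofReal_mul (by positivity),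
    ← ENNReal.ofReal_add (by positivity) (by positivity)]
  congr 1
  have hkc : ((k:ℝ)) = 2*(n:ℝ) := by rw [hk]; push_cast; ring
  rw [hkc]
  have h1 : (2*(n:ℝ)+1) ≠ 0 := by positivity
  field_simp
  ring

lemma measF : Measurable (fun p : ℝ × ℝ × ℝ => ENNReal.ofReal (Fint p.2.1 p.2.2 p.1)) := by
  apply ENNReal.measurable_ofReal.comp
  unfold Fint
  fun_prop

lemma cont_v {t u : ℝ} (ht : 0 < t) : Continuous (fun v => Fint u v t) := by
  unfold Fint
  apply Continuous.div continuous_const (by continuity)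
  intro v
  have h2 : (0:ℝ) < t^2 + v^2 := add_pos_of_pos_of_nonneg (pow_pos ht 2) (sq_nonneg v)
  have h1 : (0:ℝ) < 1 + (t*u)^2 := by positivity
  positivity

lemma L_eval : (∫⁻ t in Ioi (0:ℝ), ENNReal.ofReal (arctan t * arctan (1/t) / t))
    = ENNReal.ofReal (∑' n : ℕ, 2/(2*(n:ℝ)+1)^3) := by
  have stepA : (∫⁻ t in Ioi (0:ℝ), ENNReal.ofReal (arctan t * arctan (1/t) / t))
      = ∫⁻ t in Ioi (0:ℝ), ∫⁻ u in Ioc (0:ℝ) 1, ∫⁻ v in Ioc (0:ℝ) 1,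
          ENNReal.ofReal (Fint u v t) := by
    apply setLIntegral_congr_fun measurableSet_Ioi
    intro t ht
    dsimp only
    rw [hrep ht]
    have hgi : IntegrableOn (fun u => ∫ v in Ioc (0:ℝ) 1, Fint u v t) (Ioc (0:ℝ) 1) := by
      rw [show (fun u => ∫ v in Ioc (0:ℝ) 1, Fint u v t)
          = fun u => (1/(1+(t*u)^2)) * arctan (1/t) from funext (fun u => inner_v ht)]
      apply Continuous.integrableOn_Ioc
      apply Continuous.mul _ continuous_const
      apply Continuous.div continuous_const (by continuity)
      intro u
      positivity
    have hgnn : 0 ≤ᵐ[volume.restrict (Ioc (0:ℝ) 1)]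
        fun u => ∫ v in Ioc (0:ℝ) 1, Fint u v t :=
      ae_of_all _ (fun u => integral_nonneg (fun v => Fint_nonneg ht))
    rw [ofReal_integral_eq_lintegral_ofReal hgi hgnn]
    apply lintegral_congr
    intro u
    rw [ofReal_integral_eq_lintegral_ofReal ((cont_v ht).integrableOn_Ioc)
      (ae_of_all _ (fun v => Fint_nonneg ht))]
  rw [stepA]
  have hswap1 : (∫⁻ t in Ioi (0:ℝ), ∫⁻ u in Ioc (0:ℝ) 1, ∫⁻ v in Ioc (0:ℝ) 1,
        ENNReal.ofReal (Fint u v t))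
      = ∫⁻ u in Ioc (0:ℝ) 1, ∫⁻ t in Ioi (0:ℝ), ∫⁻ v in Ioc (0:ℝ) 1,
        ENNReal.ofReal (Fint u v t) := by
    apply lintegral_lintegral_swap
    apply Measurable.aemeasurable
    have : Measurable (fun p : ℝ × ℝ => ∫⁻ v in Ioc (0:ℝ) 1, ENNReal.ofReal (Fint p.2 v p.1)) := by
      apply Measurable.lintegral_prod_right
        (f := fun (p : ℝ × ℝ) (v : ℝ) => ENNReal.ofReal (Fint p.2 v p.1))
      exact measF.comp ((measurable_fst.comp measurable_fst).prodMk
        (((measurable_snd.comp measurable_fst)).prodMk measurable_snd))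
    exact this
  rw [hswap1]
  have hswap2 : ∀ u : ℝ, (∫⁻ t in Ioi (0:ℝ), ∫⁻ v in Ioc (0:ℝ) 1,
        ENNReal.ofReal (Fint u v t))
      = ∫⁻ v in Ioc (0:ℝ) 1, ∫⁻ t in Ioi (0:ℝ), ENNReal.ofReal (Fint u v t) := by
    intro u
    apply lintegral_lintegral_swap
    apply Measurable.aemeasurable
    exact measF.comp (measurable_fst.prodMk
      ((measurable_const.prodMk measurable_snd) : Measurable fun p : ℝ × ℝ => (u, p.2)))
  rw [lintegral_congr hswap2]
  rw [setLIntegral_congr ((Ioo_ae_eq_Ioc (a := (0:ℝ)) (b := 1)) |>.symm)]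
  have stepC : ∀ u ∈ Ioo (0:ℝ) 1,
      (∫⁻ v in Ioc (0:ℝ) 1, ∫⁻ t in Ioi (0:ℝ), ENNReal.ofReal (Fint u v t))
        = ∑' n : ℕ, ∫⁻ v in Ioc (0:ℝ) 1,
            ENNReal.ofReal ((-log u - log v) * (u*v)^(2*n)) := by
    intro u hu
    calc (∫⁻ v in Ioc (0:ℝ) 1, ∫⁻ t in Ioi (0:ℝ), ENNReal.ofReal (Fint u v t))
        = ∫⁻ v in Ioc (0:ℝ) 1, ∑' n : ℕ,
            ENNReal.ofReal ((-log u - log v) * (u*v)^(2*n)) := by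
          apply setLIntegral_congr_fun measurableSet_Ioc
          intro v hv
          dsimp only
          rw [← ofReal_integral_eq_lintegral_ofReal (Fint_integrableOn hu.1 hv.1)
            (by
              filter_upwards [ae_restrict_mem measurableSet_Ioi] with t (ht : 0 < t)
              exact Fint_nonneg ht)]
          rw [Fint_integral hu hv]
          exact geom_expand hu hv
      _ = ∑' n : ℕ, ∫⁻ v in Ioc (0:ℝ) 1,
            ENNReal.ofReal ((-log u - log v) * (u*v)^(2*n)) := by
          apply lintegral_tsum
          intro n
          exact (((measurable_const.sub Real.measurable_log).mul
            ((measurable_const.mul measurable_id).pow_const _)).ennreal_ofReal).aemeasurable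
  rw [setLIntegral_congr_fun measurableSet_Ioo stepC]
  have hterm_meas : ∀ n : ℕ, Measurable (fun u : ℝ => ∫⁻ v in Ioc (0:ℝ) 1,
      ENNReal.ofReal ((-log u - log v) * (u*v)^(2*n))) := by
    intro n
    apply Measurable.lintegral_prod_right
      (f := fun (u v : ℝ) => ENNReal.ofReal ((-log u - log v) * (u*v)^(2*n)))
    apply ENNReal.measurable_ofReal.comp
    apply Measurable.mul
    · exact ((Real.measurable_log.comp measurable_fst).neg.sub
        (Real.measurable_log.comp measurable_snd))
    · exact (measurable_fst.mul measurable_snd).pow_const _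
  rw [lintegral_tsum (fun n => (hterm_meas n).aemeasurable)]
  rw [tsum_congr term_eval]
  exact (ENNReal.ofReal_tsum_of_nonneg (fun n => by positivity) summable_odd_cubes).symm

theorem stmt16 :
    ∫ t in Set.Ioi (0 : ℝ), Real.arctan t * Real.arctan (1 / t) / t =
      (7 / 4) * ∑' n : ℕ, 1 / ((n : ℝ) + 1) ^ 3 := by
  have hnn : 0 ≤ᵐ[volume.restrict (Ioi (0:ℝ))] fun t => arctan t * arctan (1/t) / t := by
    filter_upwards [ae_restrict_mem measurableSet_Ioi] with t (ht : 0 < t)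
    have han : ∀ x : ℝ, 0 ≤ x → 0 ≤ arctan x := fun x hx => by
      rw [← Real.arctan_zero]
      exact Real.arctan_strictMono.monotone hx
    exact div_nonneg (mul_nonneg (han t ht.le) (han _ (by positivity))) ht.le
  have hm : AEStronglyMeasurable (fun t : ℝ => arctan t * arctan (1/t) / t)
      (volume.restrict (Ioi (0:ℝ))) := by
    apply Measurable.aestronglyMeasurable
    exact ((Real.continuous_arctan.measurable).mul
      (Real.continuous_arctan.measurable.comp (measurable_const.div measurable_id))).div
      measurable_id
  rw [MeasureTheory.integral_eq_lintegral_of_nonneg_ae hnn hm]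
  rw [L_eval, ENNReal.toReal_ofReal (tsum_nonneg (fun n => by positivity)), sum_odd_cubes]
end
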